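/- arXiv:1804.05746 — 8 statements merged into one kernel-verified Lean document; each statement's English description precedes it below -/
import Mathlib

section
/- For every integer β ≥ 1, the polynomial U(s) = ∑_{y=1}^s y^{2β} − s ∑_{y=1}^s y^{2β−1} (viewed as a polynomial in s via Faulhaber's formula) is an odd polynomial in s. -/
open Polynomial

lemma bernoulli_reflect (n : ℕ) :
    (Polynomial.bernoulli n).comp (1 - X) = C ((-1 : ℚ)^n) * Polynomial.bernoulli n := by
  induction n with
  | zero => simp [Polynomial.bernoulli_zero]
  | succ n ih =>
    set p := (Polynomial.bernoulli (n+1)).comp (1 - X)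
        - C ((-1 : ℚ)^(n+1)) * Polynomial.bernoulli (n+1) with hp
    have hder : derivative p = 0 := by
      rw [hp, derivative_sub, derivative_comp, derivative_bernoulli_add_one,
        derivative_mul, derivative_C, zero_mul, zero_add, derivative_bernoulli_add_one]
      simp only [mul_comp, add_comp, natCast_comp, one_comp, ih, derivative_sub,
        derivative_one, derivative_X, zero_sub, pow_succ, map_mul, map_neg, map_one]
      ring
    have h0 : p = C (p.coeff 0) := Polynomial.eq_C_of_derivative_eq_zero hder
    have he : p.eval 0 = 0 := by
      rw [hp]
      simp [eval_comp, Polynomial.bernoulli_eval_one, Polynomial.bernoulli_eval_zero,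
        bernoulli'_eq_bernoulli]
    rw [coeff_zero_eq_eval_zero, he, map_zero] at h0
    have := sub_eq_zero.mp h0
    linear_combination this

lemma bernoulli_eval_refl (m : ℕ) (y : ℚ) :
    (Polynomial.bernoulli m).eval (1 - y) = (-1:ℚ)^m * (Polynomial.bernoulli m).eval y := by
  have := congrArg (Polynomial.eval y) (bernoulli_reflect m)
  simpa [eval_comp] using this

/-- The power sum `∑_{y=1}^N y^m` as a polynomial in `N`, via Faulhaber's formula. -/
noncomputable def powerSumPoly (m : ℕ) : Polynomial ℚ :=
  C (1 / (m + 1 : ℚ)) * ((Polynomial.bernoulli (m+1)).comp (X + 1) - C (_root_.bernoulli (m+1)))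

/-- `U(s) = ∑_{y=1}^s y^{2β} − s ∑_{y=1}^s y^{2β−1}` is an odd polynomial in `s`. -/
theorem U_odd (β : ℕ) (hβ : 1 ≤ β) :
    (powerSumPoly (2*β) - X * powerSumPoly (2*β - 1)).comp (-X)
      = -(powerSumPoly (2*β) - X * powerSumPoly (2*β - 1)) := by
  obtain ⟨b, rfl⟩ : ∃ b, β = b + 1 := ⟨β - 1, by omega⟩
  have h2 : 2 * (b+1) - 1 = 2*b + 1 := by omega
  rw [h2, show 2 * (b+1) = 2*b+2 from by ring]
  apply Polynomial.funext
  intro x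
  have hb0 : _root_.bernoulli (2*b+2+1) = 0 := by
    rw [bernoulli_eq_bernoulli'_of_ne_one (by omega)]
    exact bernoulli'_eq_zero_of_odd ⟨b+1, by ring⟩ (by omega)
  have e1 : (Polynomial.bernoulli (2*b+2+1)).eval (-x+1)
      = -((Polynomial.bernoulli (2*b+2+1)).eval (x+1) - (2*b+3 : ℚ) * x^(2*b+2)) := by
    have hr := bernoulli_eval_refl (2*b+2+1) x
    have ha := Polynomial.bernoulli_eval_one_add (2*b+2+1) x
    rw [show (-x+1 : ℚ) = 1 - x by ring, hr, show ((-1:ℚ)^(2*b+2+1)) = -1 by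
      simp [pow_succ, pow_mul]]
    rw [show (1+x:ℚ) = x+1 by ring] at ha
    rw [ha]
    push_cast
    ring
  have e2 : (Polynomial.bernoulli (2*b+1+1)).eval (-x+1)
      = (Polynomial.bernoulli (2*b+1+1)).eval (x+1) - (2*b+2 : ℚ) * x^(2*b+1) := by
    have hr := bernoulli_eval_refl (2*b+1+1) x
    have ha := Polynomial.bernoulli_eval_one_add (2*b+1+1) x
    rw [show (-x+1 : ℚ) = 1 - x by ring, hr, show ((-1:ℚ)^(2*b+1+1)) = 1 by
      simp [pow_succ, pow_mul]]
    rw [show (1+x:ℚ) = x+1 by ring] at ha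
    rw [ha]
    push_cast
    ring
  simp only [powerSumPoly, eval_comp, eval_neg, eval_X, eval_sub, eval_mul, eval_add,
    eval_one, eval_C, hb0, one_mul]
  rw [e1, e2]
  have d1 : ((2*b+2 : ℕ) : ℚ) + 1 ≠ 0 := by positivity
  have d2 : ((2*b+1 : ℕ) : ℚ) + 1 ≠ 0 := by positivity
  field_simp
  push_cast
  ring
end

section
/- For every integer β ≥ 1, setting d = (p−1)/2, the quantity V(p) = p ∑_{y=1}^d y^{2β−1} − 2 ∑_{y=1}^d y^{2β}, viewed as a polynomial in p (via Faulhaber's formula with N = (p−1)/2), is an odd polynomial in p. -/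
open Polynomial

lemma bernoulli_comp_one_sub (n : ℕ) :
    (Polynomial.bernoulli n).comp (1 - X) = (-1 : ℚ[X]) ^ n * Polynomial.bernoulli n := by
  induction n with
  | zero => simp [Polynomial.bernoulli_zero]
  | succ n ih =>
    set f : ℚ[X] := (Polynomial.bernoulli (n+1)).comp (1 - X)
        - (-1 : ℚ[X]) ^ (n+1) * Polynomial.bernoulli (n+1) with hf
    have hder : derivative f = 0 := by
      rw [hf, map_sub, derivative_comp, Polynomial.derivative_bernoulli_add_one, derivative_mul]
      simp only [Polynomial.derivative_bernoulli_add_one, derivative_sub, derivative_one,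
        derivative_X, zero_sub, derivative_pow, derivative_neg, mul_zero, zero_mul, zero_add,
        neg_zero, mul_comp, add_comp, natCast_comp, one_comp]
      rw [ih]
      ring
    have hC := Polynomial.eq_C_of_derivative_eq_zero hder
    have h0 : f.eval 1 = 0 := by
      rw [hf]
      simp only [eval_sub, eval_comp, eval_one, eval_X, eval_mul, eval_pow, eval_neg]
      rw [show (1 : ℚ) - 1 = 0 by ring, Polynomial.bernoulli_eval_zero,
        Polynomial.bernoulli_eval_one, bernoulli'_eq_bernoulli]
      have hsq : ((-1 : ℚ)) ^ (n+1) * ((-1 : ℚ)) ^ (n+1) = 1 := by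
        rw [← pow_add]
        exact Even.neg_one_pow ⟨n + 1, by ring⟩
      have hsq2 : ((-1 : ℚ)) ^ (n * 2) = 1 := by
        rw [mul_comm, pow_mul]; norm_num
      linear_combination _root_.bernoulli (n + 1) * hsq
        - 2 * _root_.bernoulli (n + 1) * hsq2
    have hf0 : f = 0 := by
      rw [hC] at h0 ⊢
      simpa using h0
    rw [hf] at hf0
    exact sub_eq_zero.mp hf0

lemma bernoulli_eval_one_sub' (n : ℕ) (x : ℚ) :
    (Polynomial.bernoulli n).eval (1 - x) = (-1 : ℚ) ^ n * (Polynomial.bernoulli n).eval x := by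
  have := congrArg (eval x) (bernoulli_comp_one_sub n)
  simpa [eval_comp] using this

lemma bernoulli_odd_zero {n : ℕ} (h : Odd n) (h1 : 1 < n) : _root_.bernoulli n = 0 := by
  rw [bernoulli_eq_bernoulli'_of_ne_one (by omega)]
  exact bernoulli'_eq_zero_of_odd h h1

/-- `V(p) = p ∑_{y=1}^{(p−1)/2} y^{2β−1} − 2 ∑_{y=1}^{(p−1)/2} y^{2β}`, viewed as a
polynomial in `p` by substituting `N = (p−1)/2` in Faulhaber's formula, is an odd
polynomial in `p`. -/
theorem V_odd (β : ℕ) (hβ : 1 ≤ β) :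
    (X * (powerSumPoly (2*β - 1)).comp (C (1/2 : ℚ) * (X - 1))
        - 2 * (powerSumPoly (2*β)).comp (C (1/2 : ℚ) * (X - 1))).comp (-X)
      = -(X * (powerSumPoly (2*β - 1)).comp (C (1/2 : ℚ) * (X - 1))
        - 2 * (powerSumPoly (2*β)).comp (C (1/2 : ℚ) * (X - 1))) := by
  obtain ⟨k, rfl⟩ : ∃ k, β = k + 1 := ⟨β - 1, (Nat.succ_pred_eq_of_pos hβ).symm⟩
  have h1 : 2 * (k + 1) - 1 = 2 * k + 1 := by omega
  have h2 : 2 * (k + 1) = 2 * k + 2 := by omega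
  rw [h1, h2]
  apply Polynomial.funext
  intro x
  simp only [powerSumPoly, eval_comp, eval_mul, eval_sub, eval_add, eval_C, eval_X, eval_neg,
    eval_ofNat, eval_one]
  have e1 : (1/2 : ℚ) * (-x - 1) + 1 = 1 - ((1/2 : ℚ) * (x - 1) + 1) := by ring
  rw [e1, bernoulli_eval_one_sub', bernoulli_eval_one_sub',
    bernoulli_odd_zero (n := 2*k+2+1) (Nat.odd_iff.mpr (by omega)) (by omega)]
  have o1 : (-1 : ℚ) ^ (2 * k + 1 + 1) = 1 := by
    rw [show 2 * k + 1 + 1 = 2 * (k + 1) by ring, pow_mul]; norm_num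
  have o2 : (-1 : ℚ) ^ (2 * k + 2 + 1) = -1 := by
    rw [show 2 * k + 2 + 1 = 2 * (k + 1) + 1 by ring, pow_succ, pow_mul]; norm_num
  rw [o1, o2]
  ring
end

section
/- Let β ≥ 1 and K_{s,y} = (p − 2·max(s,y))·min(s,y). Then ∑_{y=1}^{(p−1)/2} K_{s,y} y^{2β−1}, viewed as a polynomial function of p and s, equals p times a polynomial in p and s that is even in p and odd in s. -/
open Polynomial Finset

lemma polyext {P Q : ℚ[X]} (h : ∀ n : ℕ, P.eval (n : ℚ) = Q.eval (n : ℚ)) : P = Q := by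
  apply Polynomial.eq_of_infinite_eval_eq
  apply Set.Infinite.mono (s := Set.range ((↑) : ℕ → ℚ))
  · rintro x ⟨n, rfl⟩; exact h n
  · exact Set.infinite_range_of_injective Nat.cast_injective

lemma polyext' {P Q : ℚ[X]} (h : ∀ n : ℕ, P.eval ((n : ℚ)+1) = Q.eval ((n : ℚ)+1)) : P = Q := by
  apply Polynomial.eq_of_infinite_eval_eq
  apply Set.Infinite.mono (s := Set.range (fun n : ℕ => (n : ℚ)+1))
  · rintro x ⟨n, rfl⟩; exact h n
  · exact Set.infinite_range_of_injective (by
      intro a b hab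
      simp only at hab
      exact_mod_cast (by linarith : (a:ℚ) = b))

noncomputable def Sfa (k : ℕ) : ℚ[X] :=
  (∑ i ∈ Finset.range (k + 1),
    Polynomial.C (_root_.bernoulli i * ((k + 1).choose i) / (k + 1)) * Polynomial.X ^ (k + 1 - i)).comp
    (Polynomial.X + 1)

lemma Sfa_eval (k : ℕ) (hk : k ≠ 0) (n : ℕ) :
    (Sfa k).eval (n : ℚ) = ∑ y ∈ Finset.Icc 1 n, (y : ℚ) ^ k := by
  have h1 : ∑ y ∈ Finset.Icc 1 n, (y : ℚ) ^ k = ∑ y ∈ Finset.range (n+1), (y : ℚ) ^ k := by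
    have h2 : Finset.range (n+1) = insert 0 (Finset.Icc 1 n) := by
      ext y; simp [Nat.lt_succ_iff]; omega
    rw [h2, Finset.sum_insert (by simp)]
    simp [zero_pow hk]
  rw [h1, sum_range_pow (n+1) k, Sfa, Polynomial.eval_comp]
  push_cast
  simp only [Polynomial.eval_finset_sum, Polynomial.eval_mul, Polynomial.eval_C,
    Polynomial.eval_pow, Polynomial.eval_X, Polynomial.eval_add, Polynomial.eval_one]
  exact Finset.sum_congr rfl fun i _ => by ring

lemma Sfa_diff (k : ℕ) (hk : k ≠ 0) (x : ℚ) :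
    (Sfa k).eval x - (Sfa k).eval (x - 1) = x ^ k := by
  have hpoly : Sfa k - (Sfa k).comp (X - 1) = X ^ k := by
    apply polyext'
    intro n
    have e1 : ((n:ℚ)+1) = ((n+1 : ℕ) : ℚ) := by push_cast; ring
    simp only [Polynomial.eval_sub, Polynomial.eval_comp, Polynomial.eval_X,
      Polynomial.eval_one, Polynomial.eval_pow]
    rw [show ((n:ℚ)+1-1) = (n:ℚ) by ring, e1, Sfa_eval k hk, Sfa_eval k hk,
      Finset.sum_Icc_succ_top (Nat.one_le_iff_ne_zero.mpr (Nat.succ_ne_zero n))]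
    push_cast; ring
  have := congrArg (Polynomial.eval x) hpoly
  simpa [Polynomial.eval_comp] using this

lemma Sfa_zero (k : ℕ) (hk : k ≠ 0) : (Sfa k).eval (0:ℚ) = 0 := by
  simpa using Sfa_eval k hk 0

lemma Sfa_refl (k : ℕ) (hk : k ≠ 0) (x : ℚ) :
    (Sfa k).eval (-x) = (-1:ℚ)^(k+1) * (Sfa k).eval (x - 1) := by
  have h0 := Sfa_zero k hk
  have hm1 : (Sfa k).eval (-1:ℚ) = 0 := by
    have := Sfa_diff k hk 0
    rw [h0, zero_pow hk, show ((0:ℚ)-1) = -1 by ring] at this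
    linarith
  have key : ∀ n : ℕ, (Sfa k).eval (-(n:ℚ)) = (-1:ℚ)^(k+1) * (Sfa k).eval ((n:ℚ) - 1) := by
    intro n
    induction n with
    | zero => simp only [Nat.cast_zero, neg_zero, h0, zero_sub, hm1, mul_zero]
    | succ n ih =>
      have h1 := Sfa_diff k hk (-(n:ℚ))
      have h3 := Sfa_diff k hk ((n:ℚ))
      have hsign : ((-(n:ℚ)))^k = (-1:ℚ)^k * (n:ℚ)^k := by rw [neg_pow]
      have hs2 : (-1:ℚ)^(k+1) = -(-1:ℚ)^k := by rw [pow_succ]; ring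
      have e1 : (-(((n+1:ℕ)):ℚ)) = -(n:ℚ) - 1 := by push_cast; ring
      have e2 : (((n+1:ℕ)):ℚ) - 1 = (n:ℚ) := by push_cast; ring
      rw [e1, e2]
      linear_combination (-1) * h1 + ih - (-1:ℚ)^(k+1) * h3 - hsign - (n:ℚ)^k * hs2
  have hpoly : (Sfa k).comp (-X) = Polynomial.C ((-1:ℚ)^(k+1)) * (Sfa k).comp (X - 1) := by
    apply polyext
    intro n
    simpa [Polynomial.eval_comp] using key n
  have := congrArg (Polynomial.eval x) hpoly
  simpa [Polynomial.eval_comp] using this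

lemma eval_aeval_X (P : ℚ[X]) (i : Fin 2) (v : Fin 2 → ℚ) :
    MvPolynomial.eval v (Polynomial.aeval (MvPolynomial.X i) P) = P.eval (v i) := by
  rw [Polynomial.aeval_def, Polynomial.hom_eval₂, MvPolynomial.algebraMap_eq]
  have h1 : (MvPolynomial.eval v).comp (MvPolynomial.C : ℚ →+* MvPolynomial (Fin 2) ℚ)
      = RingHom.id ℚ := by ext x; simp
  rw [h1, MvPolynomial.eval_X]
  rfl

/-- `∑_{y=1}^{(p−1)/2} K_{s,y} y^{2β−1}` equals `p` times a two-variable polynomial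
`Q(p,s)` which is even in `p` and odd in `s`. -/
theorem kernel_sum_p_even_s_odd (β : ℕ) (hβ : 1 ≤ β) :
    ∃ Q : MvPolynomial (Fin 2) ℚ,
      (∀ a b : ℚ, MvPolynomial.eval ![-a, b] Q = MvPolynomial.eval ![a, b] Q) ∧
      (∀ a b : ℚ, MvPolynomial.eval ![a, -b] Q = -MvPolynomial.eval ![a, b] Q) ∧
      ∀ p s : ℕ, Odd p → 3 ≤ p → 1 ≤ s → s ≤ (p - 1) / 2 →
        ∑ y ∈ Finset.Icc 1 ((p - 1) / 2),
            ((p : ℚ) - 2 * (max s y : ℕ)) * (min s y : ℕ) * (y : ℚ)^(2*β - 1)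
          = (p : ℚ) * MvPolynomial.eval ![(p : ℚ), (s : ℚ)] Q := by
  have hk : 2*β - 1 ≠ 0 := by omega
  have hk2 : 2*β ≠ 0 := by omega
  have hsucc : 2*β - 1 + 1 = 2*β := by omega
  set S1 : ℚ[X] := Sfa (2*β - 1) with hS1def
  set S2 : ℚ[X] := Sfa (2*β) with hS2def
  have refl1 : ∀ x : ℚ, S1.eval (-x) = S1.eval (x - 1) := by
    intro x
    have := Sfa_refl (2*β - 1) hk x
    rwa [hsucc, Even.neg_one_pow ⟨β, by ring⟩, one_mul] at this
  have refl2 : ∀ x : ℚ, S2.eval (-x) = -S2.eval (x - 1) := by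
    intro x
    have := Sfa_refl (2*β) hk2 x
    rwa [Odd.neg_one_pow ⟨β, by ring⟩, neg_one_mul] at this
  have diff1 : ∀ x : ℚ, S1.eval x - S1.eval (x-1) = x^(2*β-1) := Sfa_diff _ hk
  have diff2 : ∀ x : ℚ, S2.eval x - S2.eval (x-1) = x^(2*β) := Sfa_diff _ hk2
  -- the shifted polynomials in p
  set f : ℚ[X] := S1.comp (Polynomial.C (1/2 : ℚ) * (Polynomial.X - 1)) with hfdef
  set g : ℚ[X] := S2.comp (Polynomial.C (1/2 : ℚ) * (Polynomial.X - 1)) with hgdef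
  have feval : ∀ x : ℚ, f.eval x = S1.eval ((x-1)/2) := by
    intro x
    rw [hfdef, Polynomial.eval_comp]
    congr 1
    simp; ring
  have geval : ∀ x : ℚ, g.eval x = S2.eval ((x-1)/2) := by
    intro x
    rw [hgdef, Polynomial.eval_comp]
    congr 1
    simp; ring
  have feven : ∀ x : ℚ, f.eval (-x) = f.eval x := by
    intro x
    rw [feval, feval, show (-x-1)/2 = -((x+1)/2) by ring, refl1,
      show (x+1)/2 - 1 = (x-1)/2 by ring]
  have godd : ∀ x : ℚ, g.eval (-x) = -g.eval x := by
    intro x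
    rw [geval, geval, show (-x-1)/2 = -((x+1)/2) by ring, refl2,
      show (x+1)/2 - 1 = (x-1)/2 by ring]
  have g0 : g.eval (0:ℚ) = 0 := by
    have := godd 0; rw [neg_zero] at this; linarith
  obtain ⟨T, hT⟩ : (Polynomial.X : ℚ[X]) ∣ g :=
    Polynomial.X_dvd_iff.mpr (by rw [Polynomial.coeff_zero_eq_eval_zero]; exact g0)
  have hgT : ∀ x : ℚ, g.eval x = x * T.eval x := by
    intro x; rw [hT]; simp
  have Teven : ∀ x : ℚ, T.eval (-x) = T.eval x := by
    intro x
    rcases eq_or_ne x 0 with rfl | hx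
    · simp
    · have h1 := hgT (-x)
      have h2 := hgT x
      have h3 := godd x
      have : (-x) * T.eval (-x) = (-x) * T.eval x := by linarith
      exact mul_left_cancel₀ (neg_ne_zero.mpr hx) this
  -- odd-in-s polynomial
  set G : ℚ[X] := S2 - Polynomial.X * S1 with hGdef
  have Geval : ∀ x : ℚ, G.eval x = S2.eval x - x * S1.eval x := by
    intro x; rw [hGdef]; simp
  have Godd : ∀ x : ℚ, G.eval (-x) = -G.eval x := by
    intro x
    rw [Geval, Geval, refl1, refl2]
    have hpw : x^(2*β) = x^(2*β-1) * x := by rw [← pow_succ, hsucc]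
    linear_combination diff2 x - x * diff1 x + hpw
  set U : ℚ[X] := f - Polynomial.C 2 * T with hUdef
  have Ueval : ∀ x : ℚ, U.eval x = f.eval x - 2 * T.eval x := by
    intro x; rw [hUdef]; simp
  have Ueven : ∀ x : ℚ, U.eval (-x) = U.eval x := by
    intro x; rw [Ueval, Ueval, feven, Teven]
  refine ⟨Polynomial.aeval (MvPolynomial.X 1) G
      + MvPolynomial.X 1 * Polynomial.aeval (MvPolynomial.X 0) U, ?_, ?_, ?_⟩
  · intro a b
    simp only [map_add, map_mul, eval_aeval_X, MvPolynomial.eval_X]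
    simp only [Matrix.cons_val_zero, Matrix.cons_val_one, Matrix.head_cons]
    rw [Ueven]
  · intro a b
    simp only [map_add, map_mul, eval_aeval_X, MvPolynomial.eval_X]
    simp only [Matrix.cons_val_zero, Matrix.cons_val_one, Matrix.head_cons]
    rw [Godd]; ring
  · intro p s hodd h3p hs1 hs2
    obtain ⟨m, hm⟩ := hodd
    have hm' : (p - 1)/2 = m := by omega
    rw [hm'] at hs2 ⊢
    have hpQ : (p:ℚ) = 2*(m:ℚ)+1 := by rw [hm]; push_cast; ring
    have hm1 : 1 ≤ m := by omega
    -- evaluate Q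
    simp only [map_add, map_mul, eval_aeval_X, MvPolynomial.eval_X]
    simp only [Matrix.cons_val_zero, Matrix.cons_val_one, Matrix.head_cons]
    rw [Geval, Ueval, feval, show ((p:ℚ)-1)/2 = (m:ℚ) by rw [hpQ]; ring]
    have hpT : (p:ℚ) * T.eval (p:ℚ) = S2.eval (m:ℚ) := by
      rw [← hgT, geval, show ((p:ℚ)-1)/2 = (m:ℚ) by rw [hpQ]; ring]
    -- sum manipulations
    have hsplit : Finset.Icc 1 m = Finset.Icc 1 s ∪ Finset.Ioc s m := by
      ext y
      simp only [Finset.mem_Icc, Finset.mem_union, Finset.mem_Ioc]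
      omega
    have hdisj : Disjoint (Finset.Icc 1 s) (Finset.Ioc s m) := by
      rw [Finset.disjoint_left]; intro y hy hy'
      simp only [Finset.mem_Icc, Finset.mem_Ioc] at hy hy'; omega
    have step1 : ∑ y ∈ Finset.Icc 1 m,
        ((p : ℚ) - 2 * (max s y : ℕ)) * (min s y : ℕ) * (y : ℚ)^(2*β - 1)
        = (p:ℚ) * (∑ y ∈ Finset.Icc 1 m, ((min s y : ℕ) : ℚ) * (y : ℚ)^(2*β-1))
          - 2*(s:ℚ) * ∑ y ∈ Finset.Icc 1 m, (y:ℚ)^(2*β) := by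
      rw [Finset.mul_sum, Finset.mul_sum, ← Finset.sum_sub_distrib]
      apply Finset.sum_congr rfl
      intro y _
      have hminmax : ((max s y : ℕ):ℚ) * ((min s y : ℕ):ℚ) = (s:ℚ)*(y:ℚ) := by
        have h := min_mul_max s y
        have h2 : (max s y) * (min s y) = s * y := by rw [mul_comm]; exact h
        exact_mod_cast congrArg (Nat.cast : ℕ → ℚ) h2
      have hpw : (y:ℚ)^(2*β) = (y:ℚ)^(2*β-1) * (y:ℚ) := by rw [← pow_succ, hsucc]
      linear_combination ((-2)*(y:ℚ)^(2*β-1)) * hminmax + (2*(s:ℚ)) * hpw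
    have hminsum : ∑ y ∈ Finset.Icc 1 m, ((min s y : ℕ) : ℚ) * (y : ℚ)^(2*β-1)
        = S2.eval (s:ℚ) + (s:ℚ) * (S1.eval (m:ℚ) - S1.eval (s:ℚ)) := by
      rw [hsplit, Finset.sum_union hdisj]
      have h1 : ∑ y ∈ Finset.Icc 1 s, ((min s y : ℕ) : ℚ) * (y : ℚ)^(2*β-1)
          = ∑ y ∈ Finset.Icc 1 s, (y:ℚ)^(2*β) := by
        apply Finset.sum_congr rfl
        intro y hy
        rw [Finset.mem_Icc] at hy
        rw [min_eq_right hy.2, ← pow_succ', hsucc]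
      have h2 : ∑ y ∈ Finset.Ioc s m, ((min s y : ℕ) : ℚ) * (y : ℚ)^(2*β-1)
          = (s:ℚ) * ∑ y ∈ Finset.Ioc s m, (y:ℚ)^(2*β-1) := by
        rw [Finset.mul_sum]
        apply Finset.sum_congr rfl
        intro y hy
        rw [Finset.mem_Ioc] at hy
        rw [min_eq_left (le_of_lt hy.1)]
      have h3 : ∑ y ∈ Finset.Ioc s m, (y:ℚ)^(2*β-1)
          = S1.eval (m:ℚ) - S1.eval (s:ℚ) := by
        have ha := Sfa_eval (2*β-1) hk m
        have hb := Sfa_eval (2*β-1) hk s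
        rw [hsplit, Finset.sum_union hdisj] at ha
        rw [← hS1def] at ha hb
        linarith
      rw [h1, h2, h3, ← Sfa_eval (2*β) hk2 s, ← hS2def]
    have hS2m : ∑ y ∈ Finset.Icc 1 m, (y:ℚ)^(2*β) = S2.eval (m:ℚ) :=
      (Sfa_eval (2*β) hk2 m).symm
    rw [step1, hminsum, hS2m]
    linear_combination (2*(s:ℚ)) * hpT
end

section
/- The functions f_j : U → ℂ (for j ∈ ℤ) defined by f_j(e^{sπi/p}) = p^j, where U = { e^{sπi/p} : p odd, p > 1, gcd(s, 2p) = 1 }, are linearly independent over the field ℚ(A) of rational functions, where a rational function R acts on a function f by (R·f)(γ) = R(γ) f(γ), and two functions are identified if they agree at all but finitely many points of U. -/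
open Complex Polynomial

lemma vanish_coeffs (J : Finset ℤ) (a : ℤ → ℚ)
    (h : {q : ℕ | 0 < q ∧ ∑ j ∈ J, a j * (q : ℚ) ^ j = 0}.Infinite) :
    ∀ j ∈ J, a j = 0 := by
  rcases J.eq_empty_or_nonempty with rfl | hJ
  · simp
  intro j hj
  set m := J.min' hJ with hm
  have hmle : ∀ k ∈ J, m ≤ k := fun k hk => J.min'_le k hk
  set P : Polynomial ℚ := ∑ k ∈ J, Polynomial.C (a k) * Polynomial.X ^ (k - m).toNat with hP
  have hPz : P = 0 := by
    apply Polynomial.eq_zero_of_infinite_isRoot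
    have himg : ((fun q : ℕ => (q : ℚ)) '' {q : ℕ | 0 < q ∧ ∑ j ∈ J, a j * (q : ℚ) ^ j = 0}).Infinite :=
      h.image (Set.injOn_of_injective Nat.cast_injective)
    refine himg.mono ?_
    rintro _ ⟨q, ⟨hq0, hqs⟩, rfl⟩
    have hqne : ((q : ℚ)) ≠ 0 := Nat.cast_ne_zero.mpr hq0.ne'
    have heval : Polynomial.eval (q : ℚ) P = ∑ k ∈ J, a k * (q : ℚ) ^ (k - m).toNat := by
      simp [hP, Polynomial.eval_finset_sum]
    have hkey : ∀ k ∈ J, a k * (q : ℚ) ^ (k : ℤ) = (q : ℚ) ^ (m : ℤ) * (a k * (q : ℚ) ^ (k - m).toNat) := by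
      intro k hk
      have h1 : ((q : ℚ)) ^ (k : ℤ) = (q : ℚ) ^ (m : ℤ) * (q : ℚ) ^ (k - m).toNat := by
        rw [← zpow_natCast (q : ℚ) (k - m).toNat, Int.toNat_of_nonneg (by have := hmle k hk; omega),
          ← zpow_add₀ hqne]
        ring_nf
      rw [h1]; ring
    have := hqs
    rw [Finset.sum_congr rfl hkey, ← Finset.mul_sum] at this
    have h2 : ∑ k ∈ J, a k * (q : ℚ) ^ (k - m).toNat = 0 := by
      rcases mul_eq_zero.mp this with h' | h'
      · exact absurd h' (zpow_ne_zero _ hqne)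
      · exact h'
    simpa [Polynomial.IsRoot, heval] using h2
  have hcoeff := congrArg (fun p => Polynomial.coeff p ((j - m).toNat)) hPz
  simp only [hP, Polynomial.finset_sum_coeff, Polynomial.coeff_C_mul, Polynomial.coeff_X_pow,
    Polynomial.coeff_zero] at hcoeff
  rw [Finset.sum_eq_single j] at hcoeff
  · simpa using hcoeff
  · intro k hk hkj
    have : (j - m).toNat ≠ (k - m).toNat := by
      have h1 := hmle k hk
      have h2 := hmle j hj
      omega
    simp [this]
  · intro hj'; exact absurd hj hj'

/-- Linear independence over `ℚ(A)` of the functions `f_j` sending a primitive `2p`-th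
root of unity `e^{sπi/p}` (for odd `p > 1`, `gcd(s,2p) = 1`) to `p^j`, where two
functions are identified if they agree away from a finite set, and a rational function
`R ∈ ℚ(A)` acts by pointwise evaluation: any finite `ℚ(A)`-linear combination of the
`f_j` vanishing almost everywhere has all coefficients zero. -/
theorem powers_of_p_linearly_independent (c : ℤ →₀ RatFunc ℚ)
    (h : ∃ S : Set ℂ, S.Finite ∧
      ∀ p s : ℕ, Odd p → 1 < p → Nat.Coprime s (2*p) →
        Complex.exp (Real.pi * I * s / p) ∉ S →
          ∑ j ∈ c.support,
              (c j).eval (algebraMap ℚ ℂ) (Complex.exp (Real.pi * I * s / p)) * (p : ℂ)^(j : ℤ)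
            = 0) :
    c = 0 := by
  obtain ⟨S, hSfin, hS⟩ := h
  by_contra hc
  obtain ⟨j0, hj0⟩ : c.support.Nonempty := Finsupp.support_nonempty_iff.mpr hc
  set φ := algebraMap ℚ ℂ with hφ
  set J := c.support with hJ
  set Q : Polynomial ℚ := ∏ k ∈ J, (c k).denom with hQ
  have hQne : Q ≠ 0 := Finset.prod_ne_zero_iff.mpr fun k _ => RatFunc.denom_ne_zero _
  set g : ℤ → Polynomial ℚ := fun j => (c j).num * ∏ k ∈ J.erase j, (c k).denom with hg
  set D : ℕ := J.sup fun j => (g j).natDegree with hD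
  set N : ℕ → Polynomial ℚ := fun q => ∑ j ∈ J, Polynomial.C ((q : ℚ) ^ (j : ℤ)) * g j with hN
  have hNdeg : ∀ q, (N q).natDegree ≤ D := by
    intro q
    refine Polynomial.natDegree_sum_le_of_forall_le _ _ fun j hj => ?_
    exact le_trans (Polynomial.natDegree_C_mul_le _ _) (Finset.le_sup (f := fun j => (g j).natDegree) hj)
  set γ : ℕ → ℂ := fun q => Complex.exp (Real.pi * I / q) with hγ
  have hγprim : ∀ q : ℕ, 0 < q → IsPrimitiveRoot (γ q) (2 * q) := by
    intro q hq
    have h0 : (2 * q : ℕ) ≠ 0 := by positivity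
    have hqc : ((q : ℂ)) ≠ 0 := Nat.cast_ne_zero.mpr hq.ne'
    have harg : 2 * (Real.pi : ℂ) * I / ((2 * q : ℕ) : ℂ) = (Real.pi : ℂ) * I / q := by
      push_cast
      field_simp
    have := Complex.isPrimitiveRoot_exp (2 * q) h0
    rwa [harg] at this
  have hγinj : Set.InjOn γ {q | 0 < q} := by
    intro a ha b hb hab
    have h1 := hγprim a ha
    rw [hab] at h1
    have := h1.unique (hγprim b hb)
    omega
  set B : Set ℂ := S ∪ ((Q.map φ).roots.toFinset : Set ℂ) with hB
  have hBfin : B.Finite := hSfin.union (Finset.finite_toSet _)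
  set E : Set ℕ := {q | 0 < q ∧ γ q ∈ B} with hE
  have hEfin : E.Finite := by
    refine Set.Finite.of_finite_image (hBfin.subset ?_) (hγinj.mono fun q hq => hq.1)
    rintro _ ⟨q, hq, rfl⟩
    exact hq.2
  obtain ⟨M, hM⟩ := hEfin.bddAbove
  have keyA : ∀ q : ℕ, q.Prime → M + D + 3 ≤ q → N q = 0 := by
    intro q hqp hqb
    have hqpos : 0 < q := by omega
    have hodd : Odd q := hqp.odd_of_ne_two (by omega)
    have hγq := hγprim q hqpos
    have hγB : γ q ∉ B := by
      intro hmem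
      have : q ∈ E := ⟨hqpos, hmem⟩
      have := hM this
      omega
    have hγS : γ q ∉ S := fun hm => hγB (Or.inl hm)
    have hQγ : Polynomial.aeval (γ q) Q ≠ 0 := by
      intro h0
      apply hγB
      right
      simp only [Finset.coe_sort_coe, Multiset.mem_toFinset, Finset.mem_coe]
      rw [Polynomial.mem_roots ((Polynomial.map_ne_zero_iff (algebraMap ℚ ℂ).injective).mpr hQne)]
      rw [Polynomial.IsRoot, Polynomial.eval_map, ← Polynomial.aeval_def]
      exact h0
    have hγeq : Complex.exp (Real.pi * I * ((1 : ℕ) : ℂ) / q) = γ q := by norm_num; rfl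
    have hsum := hS q 1 hodd (by omega) (Nat.coprime_one_left _) (by rw [hγeq]; exact hγS)
    rw [hγeq] at hsum
    have hterm : ∀ j ∈ J, (c j).eval φ (γ q) * Polynomial.aeval (γ q) Q
        = Polynomial.aeval (γ q) (g j) := by
      intro j hj
      have hQfac : Q = (c j).denom * ∏ k ∈ J.erase j, (c k).denom :=
        (Finset.mul_prod_erase J _ hj).symm
      have hden : Polynomial.aeval (γ q) ((c j).denom) ≠ 0 := by
        intro h0
        apply hQγ
        rw [hQfac, map_mul, h0, zero_mul]
      rw [hQfac, map_mul, hg, map_mul, RatFunc.eval]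
      rw [Polynomial.aeval_def] at hden
      rw [Polynomial.aeval_def, Polynomial.aeval_def, Polynomial.aeval_def]
      simp only [← hφ] at hden ⊢
      field_simp
    have hNγ : Polynomial.aeval (γ q) (N q) = 0 := by
      have hcast : ∀ j : ℤ, φ ((q : ℚ) ^ j) = (q : ℂ) ^ j := by
        intro j
        rw [map_zpow₀]
        norm_num
      have hterms : ∀ j ∈ J, Polynomial.aeval (γ q) (Polynomial.C ((q : ℚ) ^ (j : ℤ)) * g j)
          = (c j).eval φ (γ q) * (q : ℂ) ^ (j : ℤ) * Polynomial.aeval (γ q) Q := by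
        intro j hj
        rw [map_mul, Polynomial.aeval_C, hcast, ← hterm j hj]
        ring
      rw [hN]
      simp only [map_sum]
      rw [Finset.sum_congr rfl hterms, ← Finset.sum_mul, hsum, zero_mul]
    by_contra hNne
    have hdvd : minpoly ℚ (γ q) ∣ N q := minpoly.dvd ℚ (γ q) hNγ
    rw [← Polynomial.cyclotomic_eq_minpoly_rat hγq (by positivity)] at hdvd
    have hdeg := Polynomial.natDegree_le_of_dvd hdvd hNne
    rw [Polynomial.natDegree_cyclotomic] at hdeg
    have htot : (2 * q).totient = q - 1 := by
      rw [Nat.totient_mul (Nat.coprime_two_left.mpr hodd), Nat.totient_two, one_mul,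
        Nat.totient_prime hqp]
    rw [htot] at hdeg
    have := hNdeg q
    omega
  have hcoeff : ∀ n : ℕ, ∀ j ∈ J, (g j).coeff n = 0 := by
    intro n
    apply vanish_coeffs J (fun j => (g j).coeff n)
    have hTinf : ({q : ℕ | q.Prime} \ {q : ℕ | q < M + D + 3}).Infinite :=
      Set.Infinite.diff Nat.infinite_setOf_prime (Set.finite_lt_nat _)
    refine hTinf.mono ?_
    rintro q ⟨hqp, hqb⟩
    simp only [Set.mem_setOf_eq, not_lt] at hqp hqb
    refine ⟨hqp.pos, ?_⟩
    have hNz := keyA q hqp (by omega)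
    have := congrArg (fun p => Polynomial.coeff p n) hNz
    simp only [hN, Polynomial.finset_sum_coeff, Polynomial.coeff_C_mul,
      Polynomial.coeff_zero] at this
    rw [← this]
    exact Finset.sum_congr rfl fun j hj => by ring
  have hg0 : g j0 = 0 := Polynomial.ext fun n => by simpa using hcoeff n j0 hj0
  have hnum : (c j0).num ≠ 0 := RatFunc.num_ne_zero (Finsupp.mem_support_iff.mp hj0)
  have hprod : (∏ k ∈ J.erase j0, (c k).denom) ≠ 0 :=
    Finset.prod_ne_zero_iff.mpr fun k _ => RatFunc.denom_ne_zero _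
  rw [hg] at hg0
  rcases mul_eq_zero.mp hg0 with h' | h'
  · exact hnum h'
  · exact hprod h'
end

section
/- There is no nonzero tuple of polynomials R_0(A), …, R_n(A) ∈ ℚ[A] with R_n ≠ 0, R_0 ≠ 0 and n > 0 such that R_n(ζ)·p^{−n} + R_{n−1}(ζ)·p^{1−n} + ⋯ + R_1(ζ)·p^{−1} + R_0(ζ) = 0 holds for all but finitely many pairs (p, ζ) where p > 1 is odd and ζ = e^{sπi/p} with gcd(s,2p) = 1. -/
open Complex Polynomial

/-- There is no relation `∑_{j=0}^n R_j(ζ) p^{−j} = 0` with `R_j ∈ ℚ[A]`, `n > 0`,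
`R_n ≠ 0`, `R_0 ≠ 0` holding for all but finitely many pairs `(p, ζ)` with `p > 1`
odd and `ζ = e^{sπi/p}`, `gcd(s, 2p) = 1`. -/
theorem no_polynomial_relation :
    ¬ ∃ (n : ℕ) (R : ℕ → Polynomial ℚ), 0 < n ∧ R n ≠ 0 ∧ R 0 ≠ 0 ∧
      ∃ S : Set (ℕ × ℂ), S.Finite ∧
        ∀ p s : ℕ, Odd p → 1 < p → Nat.Coprime s (2*p) →
          (p, Complex.exp (Real.pi * I * s / p)) ∉ S →
            ∑ j ∈ Finset.range (n + 1),
                Polynomial.aeval (Complex.exp (Real.pi * I * s / p)) (R j) * (p : ℂ)^(-(j : ℤ))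
              = 0 := by
  rintro ⟨n, R, hn, hRn, hR0, S, hSfin, hrel⟩
  -- choose a coefficient index where `R n` is nonzero
  obtain ⟨a, ha⟩ : ∃ a, (R n).coeff a ≠ 0 := by
    by_contra h
    push_neg at h
    exact hRn (Polynomial.ext fun a => by simpa using h a)
  set D := (Finset.range (n+1)).sup (fun j => (R j).natDegree) with hD
  -- the polynomial in `1/p`
  set P : Polynomial ℚ := ∑ j ∈ Finset.range (n+1), C ((R j).coeff a) * X ^ j with hP
  have hPne : P ≠ 0 := by
    have hc : P.coeff n = (R n).coeff a := by
      rw [hP, Polynomial.finset_sum_coeff]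
      rw [Finset.sum_eq_single n]
      · simp
      · intro j hj hjne
        rw [Polynomial.coeff_C_mul, Polynomial.coeff_X_pow, if_neg (by omega), mul_zero]
      · intro h
        exact absurd (Finset.self_mem_range_succ n) h
    intro h0
    rw [h0] at hc
    simp at hc
    exact ha hc.symm
  -- the finitely many "bad" primes (whose pair lies in S)
  have hbad : {p : ℕ | (p, Complex.exp (Real.pi * I * 1 / p)) ∈ S}.Finite := by
    have : {p : ℕ | (p, Complex.exp (Real.pi * I * 1 / p)) ∈ S}
        = (fun p : ℕ => (p, Complex.exp (Real.pi * I * 1 / p))) ⁻¹' S := rfl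
    rw [this]
    apply Set.Finite.preimage _ hSfin
    intro x _ y _ hxy
    exact congrArg Prod.fst hxy
  -- the good primes
  set G : Set ℕ := {p : ℕ | p.Prime ∧ D + 2 < p ∧
      (p, Complex.exp (Real.pi * I * 1 / p)) ∉ S} with hG
  have hGinf : G.Infinite := by
    apply Set.Infinite.mono (s := {p : ℕ | p.Prime} \
      (Set.Iic (D+2) ∪ {p : ℕ | (p, Complex.exp (Real.pi * I * 1 / p)) ∈ S}))
    · rintro p ⟨hp, hpn⟩
      simp only [Set.mem_union, Set.mem_Iic, not_or, Set.mem_setOf_eq, not_le] at hpn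
      exact ⟨hp, hpn.1, hpn.2⟩
    · exact Set.Infinite.diff Nat.infinite_setOf_prime ((Set.finite_Iic _).union hbad)
  -- every good prime gives a root of P
  have hroot : ∀ p ∈ G, P.IsRoot ((p : ℚ)⁻¹) := by
    rintro p ⟨hp, hpD, hpS⟩
    have hp2 : 2 < p := by omega
    have hodd : Odd p := hp.odd_of_ne_two (by omega)
    have hpne0 : (p : ℂ) ≠ 0 := Nat.cast_ne_zero.mpr (by omega)
    -- ζ is a primitive 2p-th root of unity
    set ζ : ℂ := Complex.exp (Real.pi * I * 1 / p) with hζdef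
    have h2p : (2 * p : ℕ) ≠ 0 := by positivity
    have hζ : IsPrimitiveRoot ζ (2 * p) := by
      have h := Complex.isPrimitiveRoot_exp (2 * p) h2p
      have harg : (2 * Real.pi * I / ((2 * p : ℕ) : ℂ)) = Real.pi * I * 1 / p := by
        push_cast
        field_simp
      rwa [harg] at h
    have hE := hrel p 1 hodd (by omega) (Nat.coprime_one_left _)
      (by rw [Nat.cast_one]; exact hpS)
    simp only [Nat.cast_one] at hE
    -- the polynomial Q with Q(ζ) = 0
    set Q : Polynomial ℚ := ∑ j ∈ Finset.range (n+1), R j * C ((p : ℚ)^(-(j:ℤ))) with hQ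
    have haevalQ : Polynomial.aeval ζ Q = 0 := by
      rw [hQ, map_sum]
      rw [show (0:ℂ) = ∑ j ∈ Finset.range (n + 1),
          Polynomial.aeval ζ (R j) * (p : ℂ)^(-(j : ℤ)) from hE.symm]
      refine Finset.sum_congr rfl fun j _ => ?_
      rw [map_mul, Polynomial.aeval_C, map_zpow₀, map_natCast]
    have hQ0 : Q = 0 := by
      by_contra hQne
      have hdvd : minpoly ℚ ζ ∣ Q := minpoly.dvd ℚ ζ haevalQ
      have hmin : Polynomial.cyclotomic (2*p) ℚ = minpoly ℚ ζ :=
        Polynomial.cyclotomic_eq_minpoly_rat hζ (by omega)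
      have hdeg1 : (minpoly ℚ ζ).natDegree ≤ Q.natDegree :=
        Polynomial.natDegree_le_of_dvd hdvd hQne
      have hdeg2 : (minpoly ℚ ζ).natDegree = (2*p).totient := by
        rw [← hmin, Polynomial.natDegree_cyclotomic]
      have htot : (2*p).totient = p - 1 := by
        rw [Nat.totient_mul (Nat.coprime_two_left.mpr hodd), Nat.totient_two,
          Nat.totient_prime hp, one_mul]
      have hQdeg : Q.natDegree ≤ D := by
        rw [hQ]
        apply Polynomial.natDegree_sum_le_of_forall_le
        intro j hj
        calc (R j * C ((p : ℚ)^(-(j:ℤ)))).natDegree ≤ (R j).natDegree := by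
              apply le_trans (Polynomial.natDegree_mul_le)
              simp
          _ ≤ D := Finset.le_sup (f := fun j => (R j).natDegree) hj
      omega
    -- extract the coefficient relation
    have hcoeff : Q.coeff a = 0 := by rw [hQ0]; simp
    rw [hQ, Polynomial.finset_sum_coeff] at hcoeff
    have hpq0 : (p : ℚ) ≠ 0 := Nat.cast_ne_zero.mpr (by omega)
    rw [Polynomial.IsRoot, hP, Polynomial.eval_finset_sum]
    rw [← hcoeff]
    refine Finset.sum_congr rfl fun j _ => ?_
    rw [Polynomial.coeff_mul_C, Polynomial.eval_mul, Polynomial.eval_C,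
      Polynomial.eval_pow, Polynomial.eval_X]
    congr 1
    rw [zpow_neg, zpow_natCast, inv_pow]
  -- contradiction: P has infinitely many roots
  have himg : ((fun p : ℕ => (p : ℚ)⁻¹) '' G).Infinite := by
    apply Set.Infinite.image _ hGinf
    intro x hx y hy hxy
    have hx0 : (0:ℚ) < x := by
      have := hx.1.pos; exact_mod_cast this
    have hy0 : (0:ℚ) < y := by
      have := hy.1.pos; exact_mod_cast this
    have : (x : ℚ) = y := by
      rwa [inv_inj] at hxy
    exact_mod_cast this
  have hsub : ((fun p : ℕ => (p : ℚ)⁻¹) '' G) ⊆ {x | P.IsRoot x} := by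
    rintro x ⟨p, hp, rfl⟩
    exact hroot p hp
  exact (Polynomial.finite_setOf_isRoot hPne).subset hsub |>.not_infinite himg
end

section
/- Let g ≥ 1 and let D_g^{(2c)} denote the Verlinde dimension given by the residue formula D_g^{(2c)} = ((−p)^g/2)·( 4^{1−g}·((2c+1)/p)·Res_{t=0}[ (2pt/(e^{2pt}−1)) · (s((2c+1)t)/s(t)^{2g−1}) · dt/t^{2g−1} ] − binom(c+g−1, 2g−2) ), where s(t) = sinh(t)/t. Then D_g^{(2c)} is a polynomial in p and c of total degree 3g−2, and its homogeneous part of degree 3g−2 equals (−1)^g p^{g−1} ∑_{k=0}^{2g−1} (B_k/(k!(2g−1−k)!)) c^{2g−1−k} p^k. -/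
open PowerSeries

/-- The even power series `s(at) = sinh(at)/(at) = ∑_k (at)^{2k}/(2k+1)!`, as a power
series in `t` with parameter `a`. -/
noncomputable def sSeries (a : ℚ) : PowerSeries ℚ :=
  PowerSeries.mk fun k => if Even k then a ^ k / (k + 1).factorial else 0

/-- The power series `2pt/(e^{2pt}−1) = ∑_k B_k (2p)^k t^k / k!`. -/
noncomputable def bSeries (p : ℚ) : PowerSeries ℚ :=
  PowerSeries.mk fun k => bernoulli k * (2 * p) ^ k / k.factorial

/-- The residue at `t = 0` of `(2pt/(e^{2pt}−1)) · (s((2c+1)t)/s(t)^{2g−1}) · dt/t^{2g−1}`,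
i.e. the coefficient of `t^{2g−2}` in `(2pt/(e^{2pt}−1)) · s((2c+1)t) / s(t)^{2g−1}`. -/
noncomputable def resTerm (g : ℕ) (p c : ℚ) : ℚ :=
  PowerSeries.coeff (R := ℚ) (2 * g - 2) (bSeries p * sSeries (2 * c + 1) * (sSeries 1 ^ (2 * g - 1))⁻¹)

/-- The Verlinde number `D_g^{(2c)}` given by the residue formula. -/
noncomputable def Dval (g : ℕ) (p c : ℚ) : ℚ :=
  ((-p) ^ g / 2) * ((4 : ℚ) ^ (1 - (g : ℤ)) * ((2 * c + 1) / p) * resTerm g p c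
    - (descPochhammer ℚ (2 * g - 2)).eval (c + g - 1) / (2 * g - 2).factorial)

namespace VerlindeAux

open MvPolynomial

variable {σ : Type*} {R : Type*} [CommRing R]

lemma eq_sum_hc {f : MvPolynomial σ R} {a : ℕ} (h : f.totalDegree ≤ a) :
    f = ∑ i ∈ Finset.range (a + 1), homogeneousComponent i f := by
  calc f = ∑ i ∈ Finset.range (f.totalDegree + 1), homogeneousComponent i f :=
        (MvPolynomial.sum_homogeneousComponent f).symm
    _ = ∑ i ∈ Finset.range (a + 1), homogeneousComponent i f :=
        Finset.sum_subset (Finset.range_subset_range.2 (by omega))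
          (fun i _ hi => homogeneousComponent_eq_zero i f (by simp at hi; omega))

lemma hc_mul_of_le {f g : MvPolynomial σ R} {a b : ℕ} (hf : f.totalDegree ≤ a)
    (hg : g.totalDegree ≤ b) :
    homogeneousComponent (a + b) (f * g)
      = homogeneousComponent a f * homogeneousComponent b g := by
  conv_lhs => rw [eq_sum_hc hf, eq_sum_hc hg, Finset.sum_mul_sum]
  rw [map_sum]
  rw [Finset.sum_eq_single a]
  · rw [map_sum, Finset.sum_eq_single b]
    · rw [homogeneousComponent_of_mem
        (((homogeneousComponent_isHomogeneous a f).mul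
          (homogeneousComponent_isHomogeneous b g))), if_pos rfl]
    · intro j hj hjb
      rw [homogeneousComponent_of_mem
        (((homogeneousComponent_isHomogeneous a f).mul
          (homogeneousComponent_isHomogeneous j g))), if_neg (by omega)]
    · intro h; exact absurd (Finset.self_mem_range_succ b) h
  · intro i hi hia
    rw [map_sum, Finset.sum_eq_zero]
    intro j hj
    simp only [Finset.mem_range] at hi hj
    rw [homogeneousComponent_of_mem
      (((homogeneousComponent_isHomogeneous i f).mul
        (homogeneousComponent_isHomogeneous j g)))]
    rw [if_neg (by omega)]
  · intro h; exact absurd (Finset.self_mem_range_succ a) h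

lemma totalDegree_lin_le [Nontrivial R] (r s : R) (i : σ) :
    (MvPolynomial.C r * X i + MvPolynomial.C s).totalDegree ≤ 1 := by
  refine (totalDegree_add _ _).trans ?_
  simp only [max_le_iff]
  constructor
  · refine (totalDegree_mul _ _).trans ?_
    simp [totalDegree_X]
  · simp [totalDegree_C]

lemma totalDegree_lin_pow_le [Nontrivial R] (r s : R) (i : σ) (n : ℕ) :
    ((MvPolynomial.C r * X i + MvPolynomial.C s) ^ n).totalDegree ≤ n := by
  refine (totalDegree_pow _ _).trans ?_
  have := totalDegree_lin_le r s i
  calc n * (MvPolynomial.C r * X i + MvPolynomial.C s).totalDegree ≤ n * 1 := Nat.mul_le_mul_left n this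
    _ = n := by omega

lemma hc_lin_pow [Nontrivial R] (r s : R) (i : σ) (n : ℕ) :
    homogeneousComponent n ((MvPolynomial.C r * X i + MvPolynomial.C s) ^ n) = (MvPolynomial.C r * X i) ^ n := by
  induction n with
  | zero => simp
  | succ n ih =>
    rw [pow_succ, show n + 1 = n + 1 from rfl]
    rw [hc_mul_of_le (totalDegree_lin_pow_le r s i n) (totalDegree_lin_le r s i), ih]
    rw [map_add, pow_succ]
    congr 1
    rw [homogeneousComponent_of_mem (isHomogeneous_C_mul_X r i), if_pos rfl]
    rw [homogeneousComponent_of_mem (isHomogeneous_C _ s), if_neg (by omega), add_zero]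


noncomputable def Bq : PowerSeries (MvPolynomial (Fin 2) ℚ) :=
  PowerSeries.mk fun n => MvPolynomial.C (bernoulli n * 2 ^ n / n.factorial) * MvPolynomial.X 0 ^ n

noncomputable def Sq : PowerSeries (MvPolynomial (Fin 2) ℚ) :=
  PowerSeries.mk fun n =>
    if Even n then MvPolynomial.C (((n + 1).factorial : ℚ))⁻¹ * (MvPolynomial.C 2 * MvPolynomial.X 1 + 1) ^ n else 0

noncomputable def Uq (g : ℕ) : PowerSeries (MvPolynomial (Fin 2) ℚ) :=
  PowerSeries.map (MvPolynomial.C : ℚ →+* MvPolynomial (Fin 2) ℚ) ((sSeries 1 ^ (2 * g - 1))⁻¹)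

noncomputable def Rq (g : ℕ) : MvPolynomial (Fin 2) ℚ :=
  PowerSeries.coeff (2 * g - 2) (Bq * Sq * Uq g)

noncomputable def Pq (g : ℕ) : MvPolynomial (Fin 2) ℚ :=
  Polynomial.eval₂ (MvPolynomial.C (R := ℚ) (σ := Fin 2))
    (MvPolynomial.X 1 + MvPolynomial.C ((g : ℚ) - 1)) (descPochhammer ℚ (2 * g - 2))

noncomputable def Dpoly (g : ℕ) : MvPolynomial (Fin 2) ℚ :=
  MvPolynomial.C ((-1 : ℚ) ^ g / 2) *
    (MvPolynomial.C ((4 : ℚ) ^ (1 - (g : ℤ)))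
        * (MvPolynomial.C 2 * MvPolynomial.X 1 + 1) * MvPolynomial.X 0 ^ (g - 1) * Rq g
      - MvPolynomial.C ((((2 * g - 2).factorial : ℚ))⁻¹) * (MvPolynomial.X 0 ^ g * Pq g))

lemma map_eval_Bq (p c : ℚ) :
    PowerSeries.map (MvPolynomial.eval ![p, c]) Bq = bSeries p := by
  ext n
  simp only [PowerSeries.coeff_map, Bq, bSeries, coeff_mk, map_mul, map_div₀, map_pow,
    eval_C, eval_X, Matrix.cons_val_zero]
  rw [mul_pow]
  ring

lemma map_eval_Sq (p c : ℚ) :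
    PowerSeries.map (MvPolynomial.eval ![p, c]) Sq = sSeries (2 * c + 1) := by
  ext n
  simp only [PowerSeries.coeff_map, Sq, sSeries, coeff_mk, apply_ite]
  split
  · simp only [map_mul, map_pow, map_add, eval_C, eval_X, map_one, Matrix.cons_val_one,
      Matrix.head_cons, Matrix.cons_val_zero]
    rw [div_eq_mul_inv]
    ring
  · simp

lemma map_eval_Uq (g : ℕ) (p c : ℚ) :
    PowerSeries.map (MvPolynomial.eval ![p, c]) (Uq g) = (sSeries 1 ^ (2 * g - 1))⁻¹ := by
  ext n
  simp [Uq, PowerSeries.coeff_map]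

lemma resTerm_eq (g : ℕ) (p c : ℚ) :
    resTerm g p c = MvPolynomial.eval ![p, c] (Rq g) := by
  have hmap : PowerSeries.map (MvPolynomial.eval ![p, c]) (Bq * Sq * Uq g)
      = bSeries p * sSeries (2 * c + 1) * (sSeries 1 ^ (2 * g - 1))⁻¹ := by
    rw [map_mul, map_mul, map_eval_Bq, map_eval_Sq, map_eval_Uq]
  rw [resTerm, ← hmap, PowerSeries.coeff_map]
  rfl

lemma deg_coeff_mul {F G : PowerSeries (MvPolynomial σ R)}
    (hF : ∀ n, (PowerSeries.coeff n F).totalDegree ≤ n)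
    (hG : ∀ n, (PowerSeries.coeff n G).totalDegree ≤ n) (n : ℕ) :
    (PowerSeries.coeff n (F * G)).totalDegree ≤ n := by
  rw [PowerSeries.coeff_mul]
  refine (totalDegree_finset_sum _ _).trans (Finset.sup_le ?_)
  rintro ⟨i, j⟩ hij
  rw [Finset.HasAntidiagonal.mem_antidiagonal] at hij
  calc ((PowerSeries.coeff i F) * (PowerSeries.coeff j G)).totalDegree
      ≤ (PowerSeries.coeff i F).totalDegree + (PowerSeries.coeff j G).totalDegree :=
        totalDegree_mul _ _
    _ ≤ i + j := Nat.add_le_add (hF i) (hG j)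
    _ = n := hij

lemma hc_coeff_mul {F G : PowerSeries (MvPolynomial σ R)}
    (hF : ∀ n, (PowerSeries.coeff n F).totalDegree ≤ n)
    (hG : ∀ n, (PowerSeries.coeff n G).totalDegree ≤ n) (n : ℕ) :
    homogeneousComponent n (PowerSeries.coeff n (F * G))
      = ∑ ij ∈ Finset.HasAntidiagonal.antidiagonal n,
          homogeneousComponent ij.1 (PowerSeries.coeff ij.1 F)
            * homogeneousComponent ij.2 (PowerSeries.coeff ij.2 G) := by
  rw [PowerSeries.coeff_mul, map_sum]
  refine Finset.sum_congr rfl ?_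
  rintro ⟨i, j⟩ hij
  rw [Finset.HasAntidiagonal.mem_antidiagonal] at hij
  rw [← hij]
  exact hc_mul_of_le (hF i) (hG j)

lemma degBq : ∀ n, (PowerSeries.coeff n Bq).totalDegree ≤ n := fun n => by
  rw [Bq, coeff_mk]
  exact (isHomogeneous_C_mul_X_pow _ 0 n).totalDegree_le

lemma hcBq (n : ℕ) :
    homogeneousComponent n (PowerSeries.coeff n Bq) = PowerSeries.coeff n Bq := by
  rw [Bq, coeff_mk, homogeneousComponent_of_mem (isHomogeneous_C_mul_X_pow _ 0 n), if_pos rfl]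

lemma degSq : ∀ n, (PowerSeries.coeff n Sq).totalDegree ≤ n := fun n => by
  rw [Sq, coeff_mk]
  split
  · refine (totalDegree_mul _ _).trans ?_
    simp only [totalDegree_C, zero_add]
    exact totalDegree_lin_pow_le 2 1 1 n
  · simp

lemma hcSq (n : ℕ) :
    homogeneousComponent n (PowerSeries.coeff n Sq)
      = if Even n then MvPolynomial.C (((n + 1).factorial : ℚ))⁻¹ * (MvPolynomial.C 2 * MvPolynomial.X 1) ^ n else 0 := by
  rw [Sq, coeff_mk, apply_ite (homogeneousComponent n), map_zero]
  congr 1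
  rw [homogeneousComponent_C_mul]
  congr 1
  rw [← C_1 (R := ℚ) (σ := Fin 2), hc_lin_pow]

lemma degUq (g : ℕ) : ∀ n, (PowerSeries.coeff n (Uq g)).totalDegree ≤ n := fun n => by
  rw [Uq, PowerSeries.coeff_map]
  simp [totalDegree_C]

lemma hcUq (g : ℕ) (n : ℕ) :
    homogeneousComponent n (PowerSeries.coeff n (Uq g)) = if n = 0 then 1 else 0 := by
  rw [Uq, PowerSeries.coeff_map]
  split
  · subst ‹n = 0›
    have h1 : PowerSeries.constantCoeff ((sSeries 1 ^ (2 * g - 1))⁻¹) = 1 := by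
      rw [PowerSeries.constantCoeff_inv, map_pow]
      have h2 : PowerSeries.constantCoeff (sSeries 1) = 1 := by
        rw [← PowerSeries.coeff_zero_eq_constantCoeff_apply, sSeries, PowerSeries.coeff_mk]
        norm_num
      rw [h2]; norm_num
    rw [homogeneousComponent_zero, MvPolynomial.coeff_zero_C,
      PowerSeries.coeff_zero_eq_constantCoeff_apply, h1, map_one]
  · exact homogeneousComponent_eq_zero _ _ (by simp [totalDegree_C]; omega)

lemma hcRp (g : ℕ) :
    homogeneousComponent (2 * g - 2) (PowerSeries.coeff (2 * g - 2) (Bq * Sq * Uq g))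
      = ∑ ij ∈ Finset.HasAntidiagonal.antidiagonal (2 * g - 2),
          (MvPolynomial.C (bernoulli ij.1 * 2 ^ ij.1 / ij.1.factorial) * MvPolynomial.X 0 ^ ij.1) *
            (if Even ij.2 then MvPolynomial.C (((ij.2 + 1).factorial : ℚ))⁻¹ * (MvPolynomial.C 2 * MvPolynomial.X 1) ^ ij.2
              else 0) := by
  set n := 2 * g - 2 with hn
  rw [hc_coeff_mul (deg_coeff_mul degBq degSq) (degUq g)]
  rw [Finset.sum_eq_single (n, 0)]
  · rw [hcUq, if_pos rfl, mul_one, hc_coeff_mul degBq degSq]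
    refine Finset.sum_congr rfl ?_
    rintro ⟨i, j⟩ _
    rw [hcBq, hcSq, Bq, coeff_mk]
  · rintro ⟨l, k⟩ hlk hne
    rw [Finset.HasAntidiagonal.mem_antidiagonal] at hlk
    have hk : k ≠ 0 := by rintro rfl; exact hne (by simp [← hlk])
    rw [hcUq, if_neg hk, mul_zero]
  · intro h
    exact absurd (by simp : (n, 0) ∈ Finset.HasAntidiagonal.antidiagonal n) h

lemma evalPq (g : ℕ) (p c : ℚ) :
    MvPolynomial.eval ![p, c] (Pq g) = (descPochhammer ℚ (2 * g - 2)).eval (c + g - 1) := by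
  rw [Pq, Polynomial.hom_eval₂]
  have h1 : (MvPolynomial.eval ![p, c]).comp (MvPolynomial.C : ℚ →+* MvPolynomial (Fin 2) ℚ)
      = RingHom.id ℚ := RingHom.ext (by simp)
  have h2 : (MvPolynomial.eval ![p, c]) (MvPolynomial.X 1 + MvPolynomial.C ((g : ℚ) - 1)) = c + g - 1 := by
    simp; ring
  rw [h1, h2]
  rfl

lemma lin_eq (a : ℚ) : (MvPolynomial.X 1 + MvPolynomial.C a : MvPolynomial (Fin 2) ℚ)
    = MvPolynomial.C 1 * MvPolynomial.X 1 + MvPolynomial.C a := by rw [C_1, one_mul]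

lemma degPq (g : ℕ) : (Pq g).totalDegree ≤ 2 * g - 2 := by
  rw [Pq, Polynomial.eval₂_eq_sum_range, descPochhammer_natDegree]
  refine (totalDegree_finset_sum _ _).trans (Finset.sup_le ?_)
  intro i hi
  rw [Finset.mem_range] at hi
  refine (totalDegree_mul _ _).trans ?_
  rw [totalDegree_C, zero_add, lin_eq]
  exact (totalDegree_lin_pow_le 1 _ 1 i).trans (by omega)

lemma hcPq (g : ℕ) :
    homogeneousComponent (2 * g - 2) (Pq g) = MvPolynomial.X 1 ^ (2 * g - 2) := by
  rw [Pq, Polynomial.eval₂_eq_sum_range, descPochhammer_natDegree, map_sum,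
    Finset.sum_eq_single (2 * g - 2)]
  · rw [homogeneousComponent_C_mul, lin_eq, hc_lin_pow]
    have : (descPochhammer ℚ (2 * g - 2)).coeff (2 * g - 2) = 1 := by
      have := (monic_descPochhammer ℚ (2 * g - 2)).coeff_natDegree
      rwa [descPochhammer_natDegree] at this
    rw [this, C_1, one_mul, one_mul]
  · intro i hi hne
    rw [Finset.mem_range] at hi
    refine homogeneousComponent_eq_zero _ _ ?_
    refine lt_of_le_of_lt ((totalDegree_mul _ _).trans ?_) (show i < 2 * g - 2 by omega)
    rw [totalDegree_C, zero_add, lin_eq]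
    exact totalDegree_lin_pow_le 1 _ 1 i
  · intro h
    exact absurd (Finset.self_mem_range_succ _) h

lemma evalDpoly (g : ℕ) (hg : 1 ≤ g) (p c : ℚ) (hp : p ≠ 0) :
    MvPolynomial.eval ![p, c] (Dpoly g) = Dval g p c := by
  obtain ⟨m, rfl⟩ : ∃ m, g = m + 1 := ⟨g - 1, by omega⟩
  have hR := resTerm_eq (m + 1) p c
  rw [Dpoly, Dval]
  simp only [map_mul, map_sub, eval_C, map_add, map_pow, eval_X, Matrix.cons_val_zero,
    Matrix.cons_val_one, Matrix.head_cons, map_one, evalPq]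
  rw [← hR]
  rw [show (m + 1) - 1 = m from rfl]
  rw [neg_pow]
  field_simp
  ring
lemma one_eq_C : (1 : MvPolynomial (Fin 2) ℚ) = MvPolynomial.C 1 := by simp

lemma degmul {p q : MvPolynomial (Fin 2) ℚ} {a b : ℕ} (h1 : p.totalDegree ≤ a)
    (h2 : q.totalDegree ≤ b) : (p * q).totalDegree ≤ a + b :=
  (totalDegree_mul _ _).trans (Nat.add_le_add h1 h2)

lemma degXpow (i : Fin 2) (k : ℕ) : ((MvPolynomial.X i : MvPolynomial (Fin 2) ℚ) ^ k).totalDegree ≤ k :=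
  (totalDegree_pow _ _).trans (by simp [totalDegree_X])

lemma degRq (g : ℕ) : (Rq g).totalDegree ≤ 2 * g - 2 :=
  deg_coeff_mul (deg_coeff_mul degBq degSq) (degUq g) _

lemma degLin : (MvPolynomial.C 2 * MvPolynomial.X 1 + 1 : MvPolynomial (Fin 2) ℚ).totalDegree ≤ 1 := by
  rw [one_eq_C]; exact totalDegree_lin_le 2 1 1

lemma degDpoly_le (m : ℕ) : (Dpoly (m + 1)).totalDegree ≤ 3 * m + 1 := by
  have h2 : 2 * (m + 1) - 2 = 2 * m := by omega
  have hR : (Rq (m + 1)).totalDegree ≤ 2 * m := h2 ▸ degRq (m + 1)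
  have hP : (Pq (m + 1)).totalDegree ≤ 2 * m := h2 ▸ degPq (m + 1)
  rw [Dpoly]
  have hA : (MvPolynomial.C ((4 : ℚ) ^ (1 - ((m + 1 : ℕ) : ℤ)))
      * (MvPolynomial.C 2 * MvPolynomial.X 1 + 1) * MvPolynomial.X 0 ^ (m + 1 - 1)
      * Rq (m + 1)).totalDegree ≤ 0 + 1 + (m + 1 - 1) + 2 * m :=
    degmul (degmul (degmul (totalDegree_C _).le degLin) (degXpow 0 (m + 1 - 1))) hR
  have hB : (MvPolynomial.C ((((2 * (m + 1) - 2).factorial : ℚ))⁻¹)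
      * (MvPolynomial.X 0 ^ (m + 1) * Pq (m + 1))).totalDegree ≤ 0 + ((m + 1) + 2 * m) :=
    degmul (totalDegree_C _).le (degmul (degXpow 0 (m + 1)) hP)
  refine (degmul (totalDegree_C _).le ?_).trans (by omega : 0 + (3 * m + 1) ≤ 3 * m + 1)
  rw [sub_eq_add_neg]
  refine (totalDegree_add _ _).trans (max_le ?_ ?_)
  · exact hA.trans (by omega)
  · rw [totalDegree_neg]; exact hB.trans (by omega)

lemma hcDpoly (m : ℕ) :
    homogeneousComponent (3 * m + 1) (Dpoly (m + 1))
      = MvPolynomial.C ((-1 : ℚ) ^ (m + 1) / 2) *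
          (MvPolynomial.C ((4 : ℚ) ^ (1 - ((m + 1 : ℕ) : ℤ)))
              * (MvPolynomial.C 2 * MvPolynomial.X 1 * MvPolynomial.X 0 ^ m) *
              (∑ ij ∈ Finset.HasAntidiagonal.antidiagonal (2 * m),
                (MvPolynomial.C (bernoulli ij.1 * 2 ^ ij.1 / ij.1.factorial) * MvPolynomial.X 0 ^ ij.1) *
                  (if Even ij.2 then
                    MvPolynomial.C (((ij.2 + 1).factorial : ℚ))⁻¹ * (MvPolynomial.C 2 * MvPolynomial.X 1) ^ ij.2 else 0))
            - MvPolynomial.C ((((2 * m).factorial : ℚ))⁻¹) *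
                (MvPolynomial.X 0 ^ (m + 1) * MvPolynomial.X 1 ^ (2 * m))) := by
  have h2 : 2 * (m + 1) - 2 = 2 * m := by omega
  have hR : (Rq (m + 1)).totalDegree ≤ 2 * m := h2 ▸ degRq (m + 1)
  have hP : (Pq (m + 1)).totalDegree ≤ 2 * m := h2 ▸ degPq (m + 1)
  have hRtop : homogeneousComponent (2 * m) (Rq (m + 1))
      = ∑ ij ∈ Finset.HasAntidiagonal.antidiagonal (2 * m),
          (MvPolynomial.C (bernoulli ij.1 * 2 ^ ij.1 / ij.1.factorial) * MvPolynomial.X 0 ^ ij.1) *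
            (if Even ij.2 then
              MvPolynomial.C (((ij.2 + 1).factorial : ℚ))⁻¹ * (MvPolynomial.C 2 * MvPolynomial.X 1) ^ ij.2 else 0) := by
    have := hcRp (m + 1)
    rwa [h2] at this
  have hPtop : homogeneousComponent (2 * m) (Pq (m + 1)) = MvPolynomial.X 1 ^ (2 * m) := by
    have := hcPq (m + 1)
    rwa [h2] at this
  rw [Dpoly, homogeneousComponent_C_mul, h2]
  congr 1
  rw [map_sub]
  congr 1
  · have hre : MvPolynomial.C ((4 : ℚ) ^ (1 - ((m + 1 : ℕ) : ℤ)))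
        * (MvPolynomial.C 2 * MvPolynomial.X 1 + 1) * MvPolynomial.X 0 ^ (m + 1 - 1)
        * Rq (m + 1)
        = MvPolynomial.C ((4 : ℚ) ^ (1 - ((m + 1 : ℕ) : ℤ))) *
            (((MvPolynomial.C 2 * MvPolynomial.X 1 + 1) * MvPolynomial.X 0 ^ m) * Rq (m + 1)) := by
      rw [show m + 1 - 1 = m from rfl]; ring
    rw [hre, homogeneousComponent_C_mul]
    rw [show 3 * m + 1 = (m + 1) + 2 * m by omega]
    rw [hc_mul_of_le (show ((MvPolynomial.C 2 * MvPolynomial.X 1 + 1) * MvPolynomial.X 0 ^ m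
      : MvPolynomial (Fin 2) ℚ).totalDegree ≤ m + 1
      from (degmul degLin (degXpow 0 m)).trans (by omega)) hR, hRtop, ← mul_assoc]
    congr 2
    have hexp : (MvPolynomial.C 2 * MvPolynomial.X 1 + 1) * MvPolynomial.X 0 ^ m
        = MvPolynomial.C 2 * MvPolynomial.X 1 * MvPolynomial.X 0 ^ m
          + (MvPolynomial.X 0 ^ m : MvPolynomial (Fin 2) ℚ) := by
      ring
    have step : homogeneousComponent (m + 1)
        (MvPolynomial.C 2 * MvPolynomial.X 1 * MvPolynomial.X 0 ^ m + MvPolynomial.X 0 ^ m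
          : MvPolynomial (Fin 2) ℚ) = MvPolynomial.C 2 * MvPolynomial.X 1 * MvPolynomial.X 0 ^ m := by
      rw [map_add]
      rw [homogeneousComponent_of_mem ((isHomogeneous_C_mul_X (2:ℚ) (1 : Fin 2)).mul
        (isHomogeneous_X_pow (R := ℚ) 0 m)), if_pos (by omega)]
      rw [homogeneousComponent_of_mem (isHomogeneous_X_pow (R := ℚ) 0 m), if_neg (by omega),
        add_zero]
    exact (congrArg (homogeneousComponent (σ := Fin 2) (R := ℚ) (m + 1)) hexp).trans step
  · rw [homogeneousComponent_C_mul]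
    rw [show 3 * m + 1 = (m + 1) + 2 * m by omega]
    rw [hc_mul_of_le (degXpow 0 (m + 1)) hP, hPtop]
    rw [homogeneousComponent_of_mem (isHomogeneous_X_pow (R := ℚ) 0 (m + 1)), if_pos rfl]
lemma hc_eq_target (m : ℕ) :
    MvPolynomial.C ((-1 : ℚ) ^ (m + 1) / 2) *
        (MvPolynomial.C ((4 : ℚ) ^ (1 - ((m + 1 : ℕ) : ℤ)))
            * (MvPolynomial.C 2 * MvPolynomial.X 1
                * (MvPolynomial.X 0 : MvPolynomial (Fin 2) ℚ) ^ m) *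
            (∑ ij ∈ Finset.HasAntidiagonal.antidiagonal (2 * m),
              (MvPolynomial.C (bernoulli ij.1 * 2 ^ ij.1 / ij.1.factorial) * MvPolynomial.X 0 ^ ij.1) *
                (if Even ij.2 then
                  MvPolynomial.C (((ij.2 + 1).factorial : ℚ))⁻¹ * (MvPolynomial.C 2 * MvPolynomial.X 1) ^ ij.2 else 0))
          - MvPolynomial.C ((((2 * m).factorial : ℚ))⁻¹) *
              (MvPolynomial.X 0 ^ (m + 1) * MvPolynomial.X 1 ^ (2 * m)))
      = ∑ k ∈ Finset.range (2 * m + 2),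
          MvPolynomial.C ((-1 : ℚ) ^ (m + 1) * bernoulli k
              / (k.factorial * (2 * m + 1 - k).factorial))
            * MvPolynomial.X 0 ^ (m + k) * MvPolynomial.X 1 ^ (2 * m + 1 - k) := by
  apply MvPolynomial.funext
  intro x
  rw [Finset.Nat.sum_antidiagonal_eq_sum_range_succ_mk]
  simp only [map_sum, map_mul, map_sub, map_pow, eval_C, eval_X, apply_ite (MvPolynomial.eval x),
    map_zero]
  set x0 := x 0 with hx0
  set x1 := x 1 with hx1
  set T : ℕ → ℚ := fun k => (-1 : ℚ) ^ (m + 1) * bernoulli k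
      / (k.factorial * (2 * m + 1 - k).factorial) * x0 ^ (m + k) * x1 ^ (2 * m + 1 - k) with hT
  set term : ℕ → ℚ := fun i => bernoulli i * 2 ^ i / (i.factorial : ℚ) * x0 ^ i *
      (if Even (2 * m - i) then ((2 * m - i + 1).factorial : ℚ)⁻¹ * (2 * x1) ^ (2 * m - i) else 0)
    with hterm_def
  have h2m : Even (2 * m) := even_two_mul m
  have hodd : ∀ k, ¬ Even k → k ≠ 1 → T k = 0 := by
    intro k hk hk1
    have hodd' : Odd k := Nat.odd_iff.mpr (Nat.not_even_iff.mp hk)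
    have hb : bernoulli k = 0 := by
      rw [bernoulli_eq_bernoulli'_of_ne_one hk1]
      exact bernoulli'_eq_zero_of_odd hodd' (by obtain ⟨j, rfl⟩ := hodd'; omega)
    simp [hT, hb]
  have hsplit : ∑ k ∈ Finset.range (2 * m + 2), T k
      = (∑ k ∈ Finset.range (2 * m + 2), if Even k then T k else 0) + T 1 := by
    calc ∑ k ∈ Finset.range (2 * m + 2), T k
        = ∑ k ∈ Finset.range (2 * m + 2),
            ((if Even k then T k else 0) + (if Even k then 0 else T k)) :=
          Finset.sum_congr rfl (fun k _ => by by_cases h : Even k <;> simp [h])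
      _ = (∑ k ∈ Finset.range (2 * m + 2), if Even k then T k else 0)
            + ∑ k ∈ Finset.range (2 * m + 2), if Even k then 0 else T k :=
          Finset.sum_add_distrib
      _ = (∑ k ∈ Finset.range (2 * m + 2), if Even k then T k else 0) + T 1 := by
          congr 1
          rw [Finset.sum_eq_single 1]
          · simp
          · intro k hk hne
            by_cases h : Even k
            · simp [h]
            · simp [h, hodd k h hne]
          · intro h1
            exact absurd (Finset.mem_range.2 (by omega)) h1
  have hdrop : (∑ k ∈ Finset.range (2 * m + 2), if Even k then T k else 0)
      = ∑ k ∈ Finset.range (2 * m + 1), if Even k then T k else 0 := by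
    rw [show 2 * m + 2 = (2 * m + 1) + 1 from rfl, Finset.sum_range_succ]
    simp [Nat.even_add_one, h2m, parity_simps]
  have hcore : ∀ i ∈ Finset.range (2 * m + 1),
      (if Even i then T i else 0)
        = ((-1 : ℚ) ^ (m + 1) / 2 * ((4 : ℚ) ^ (1 - ((m + 1 : ℕ) : ℤ)) * (2 * x1 * x0 ^ m)))
            * term i := by
    intro i hi
    rw [Finset.mem_range] at hi
    have him : i ≤ 2 * m := by omega
    by_cases hEv : Even i
    · have hEvj : Even (2 * m - i) := by
        rw [Nat.even_sub him]
        simp [h2m, hEv]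
      rw [if_pos hEv, hterm_def]
      simp only []
      rw [if_pos hEvj, hT]
      simp only []
      have hj1 : 2 * m - i + 1 = 2 * m + 1 - i := by omega
      have hf4 : (4 : ℚ) ^ (1 - ((m + 1 : ℕ) : ℤ)) = ((2 : ℚ) ^ (2 * m))⁻¹ := by
        push_cast
        rw [show (1 - ((m : ℤ) + 1)) = -(m : ℤ) by ring, zpow_neg, zpow_natCast]
        congr 1
        rw [show (4 : ℚ) = 2 ^ 2 by norm_num, ← pow_mul]
      have hx2 : (2 : ℚ) ^ (2 * m - i) = 2 ^ (2 * m) * ((2 : ℚ) ^ i)⁻¹ := by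
        field_simp
        rw [← pow_add]
        congr 1
        omega
      rw [hj1, hf4, mul_pow, hx2]
      have hxx : x1 ^ (2 * m + 1 - i) = x1 ^ (2 * m - i) * x1 := by
        rw [← pow_succ]
        congr 1
        omega
      rw [hxx]
      have hfac : ((2 * m + 1 - i).factorial : ℚ) ≠ 0 := Nat.cast_ne_zero.2 (Nat.factorial_ne_zero _)
      have hfac2 : ((i).factorial : ℚ) ≠ 0 := Nat.cast_ne_zero.2 (Nat.factorial_ne_zero _)
      field_simp
      ring
    · have hEvj : ¬ Even (2 * m - i) := by
        rw [Nat.even_sub him]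
        simp [h2m, hEv]
      rw [if_neg hEv, hterm_def]
      simp only []
      rw [if_neg hEvj, mul_zero, mul_zero]
  rw [hsplit, hdrop, Finset.sum_congr rfl hcore, ← Finset.mul_sum]
  have hT1 : T 1 = (-1 : ℚ) ^ (m + 1) * (-1 / 2) / ((2 * m).factorial : ℚ)
      * x0 ^ (m + 1) * x1 ^ (2 * m) := by
    rw [hT]
    simp only []
    rw [show 2 * m + 1 - 1 = 2 * m by omega, bernoulli_one, Nat.factorial_one]
    push_cast
    ring
  rw [hT1, show (2 * m).succ = 2 * m + 1 from rfl]
  ring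
lemma degree_fin2 (d : Fin 2 →₀ ℕ) : Finsupp.degree d = d 0 + d 1 := by
  rw [Finsupp.degree_apply, Finset.sum_subset (Finset.subset_univ _)]
  · exact Fin.sum_univ_two d
  · intro i _ hi
    simpa using Finsupp.notMem_support_iff.mp hi

lemma mon_form (a : ℚ) (s t : ℕ) :
    MvPolynomial.C a * (MvPolynomial.X (0 : Fin 2) : MvPolynomial (Fin 2) ℚ) ^ s
        * MvPolynomial.X 1 ^ t
      = MvPolynomial.monomial (Finsupp.single 0 s + Finsupp.single 1 t) a := by
  rw [X_pow_eq_monomial, X_pow_eq_monomial, C_mul_monomial, monomial_mul]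
  norm_num

lemma target_coeff_ne (m : ℕ) :
    MvPolynomial.coeff (Finsupp.single (0 : Fin 2) m + Finsupp.single 1 (2 * m + 1))
        (∑ k ∈ Finset.range (2 * m + 2),
          MvPolynomial.C ((-1 : ℚ) ^ (m + 1) * bernoulli k
              / (k.factorial * (2 * m + 1 - k).factorial))
            * MvPolynomial.X 0 ^ (m + k) * MvPolynomial.X 1 ^ (2 * m + 1 - k)) ≠ 0 := by
  rw [MvPolynomial.coeff_sum]
  simp only [mon_form, MvPolynomial.coeff_monomial]
  rw [Finset.sum_eq_single 0]
  · rw [if_pos (by simp)]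
    simp only [bernoulli_zero, Nat.factorial_zero, Nat.sub_zero, Nat.cast_one, one_mul, mul_one]
    apply div_ne_zero
    · exact pow_ne_zero _ (by norm_num)
    · exact Nat.cast_ne_zero.2 (Nat.factorial_ne_zero _)
  · intro k hk hkne
    rw [if_neg]
    intro h
    have h0 := DFunLike.congr_fun h (0 : Fin 2)
    simp [Finsupp.single_apply] at h0
    omega
  · intro h
    exact absurd (Finset.mem_range.2 (by omega)) h


end VerlindeAux

/-- `D_g^{(2c)}` is a polynomial in `p` and `c` of total degree `3g−2`, whose top-degree
homogeneous part is `(−1)^g p^{g−1} ∑_{k=0}^{2g−1} (B_k/(k!(2g−1−k)!)) c^{2g−1−k} p^k`. -/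
theorem verlinde_top_homogeneous_part (g : ℕ) (hg : 1 ≤ g) :
    ∃ D : MvPolynomial (Fin 2) ℚ,
      (∀ p c : ℚ, p ≠ 0 → MvPolynomial.eval ![p, c] D = Dval g p c) ∧
      D.totalDegree = 3 * g - 2 ∧
      MvPolynomial.homogeneousComponent (3 * g - 2) D
        = ∑ k ∈ Finset.range (2 * g),
            MvPolynomial.C ((-1) ^ g * bernoulli k
                / (k.factorial * (2 * g - 1 - k).factorial))
              * MvPolynomial.X 0 ^ (g - 1 + k) * MvPolynomial.X 1 ^ (2 * g - 1 - k) := by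
  obtain ⟨m, rfl⟩ : ∃ m, g = m + 1 := ⟨g - 1, by omega⟩
  have e32 : 3 * (m + 1) - 2 = 3 * m + 1 := by omega
  have htop : MvPolynomial.homogeneousComponent (3 * m + 1) (VerlindeAux.Dpoly (m + 1))
      = ∑ k ∈ Finset.range (2 * m + 2),
          MvPolynomial.C ((-1 : ℚ) ^ (m + 1) * bernoulli k
              / (k.factorial * (2 * m + 1 - k).factorial))
            * MvPolynomial.X 0 ^ (m + k) * MvPolynomial.X 1 ^ (2 * m + 1 - k) :=
    (VerlindeAux.hcDpoly m).trans (VerlindeAux.hc_eq_target m)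
  refine ⟨VerlindeAux.Dpoly (m + 1),
    fun p c hp => VerlindeAux.evalDpoly (m + 1) (by omega) p c hp, ?_, ?_⟩
  · rw [e32]
    refine le_antisymm (VerlindeAux.degDpoly_le m) ?_
    set d := Finsupp.single (0 : Fin 2) m + Finsupp.single 1 (2 * m + 1) with hd
    have hdeg : Finsupp.degree d = 3 * m + 1 := by
      rw [hd, VerlindeAux.degree_fin2]
      simp [Finsupp.single_apply]
      omega
    have hco : MvPolynomial.coeff d (VerlindeAux.Dpoly (m + 1)) ≠ 0 := by
      have h1 := MvPolynomial.coeff_homogeneousComponent (3 * m + 1) (VerlindeAux.Dpoly (m + 1)) d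
      rw [htop, if_pos hdeg] at h1
      rw [← h1]
      exact VerlindeAux.target_coeff_ne m
    have h2 := MvPolynomial.le_totalDegree (MvPolynomial.mem_support_iff.2 hco)
    have h3 : (d.sum fun _ e => e) = Finsupp.degree d := rfl
    rw [h3, hdeg] at h2
    exact h2
  · rw [e32, htop, show 2 * (m + 1) = 2 * m + 2 by omega]
    refine Finset.sum_congr rfl fun k hk => ?_
    simp only [show 2 * m + 2 - 1 = 2 * m + 1 from by omega, Nat.add_sub_cancel]
end

section
/- Let g ≥ 1 and let D_g^{(2c)} be the polynomial in p and c given by the residue formula (as in the previous context). Then D_g^{(2c)} can be written as p^{g−1}·X(p,c) + p^g·Y(c), where X(p,c) is a polynomial that is even as a polynomial in p and Y(c) is a polynomial in c alone. -/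
open PowerSeries

/-- coefficients of the inverse series -/
noncomputable def Ecoef (g n : ℕ) : ℚ := PowerSeries.coeff (R := ℚ) n ((sSeries 1 ^ (2 * g - 1))⁻¹)

/-- the coefficient of `t^m` in `s((2c+1)t)/s(t)^{2g-1}`, as a polynomial in `c` -/
noncomputable def Apoly (g m : ℕ) : Polynomial ℚ :=
  ∑ j ∈ Finset.range (m + 1),
    (if Even j then Polynomial.C ((1 : ℚ) / (j + 1).factorial) * (2 * Polynomial.X + 1) ^ j
      else 0) * Polynomial.C (Ecoef g (m - j))

lemma coeff_mul_range (n : ℕ) (φ ψ : PowerSeries ℚ) :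
    coeff n (φ * ψ) = ∑ k ∈ Finset.range (n + 1), coeff k φ * coeff (n - k) ψ := by
  rw [coeff_mul, Finset.Nat.sum_antidiagonal_eq_sum_range_succ_mk]

lemma Apoly_eval (g m : ℕ) (c : ℚ) :
    (Apoly g m).eval c = coeff (R := ℚ) m (sSeries (2 * c + 1) * (sSeries 1 ^ (2 * g - 1))⁻¹) := by
  rw [coeff_mul_range, Apoly, Polynomial.eval_finset_sum]
  refine Finset.sum_congr rfl fun j _ => ?_
  by_cases h : Even j
  · simp only [h, if_true, Polynomial.eval_mul, Polynomial.eval_pow, Polynomial.eval_add,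
      Polynomial.eval_one, Polynomial.eval_C, Polynomial.eval_X, Polynomial.eval_ofNat,
      sSeries, coeff_mk, Ecoef]
    ring
  · simp [h, sSeries]

lemma resTerm_eq (g : ℕ) (hg : 1 ≤ g) (p c : ℚ) :
    resTerm g p c = ∑ k ∈ Finset.range (2 * g - 1),
      (bernoulli k * 2 ^ k / k.factorial) * p ^ k * (Apoly g (2 * g - 2 - k)).eval c := by
  have h1 : 2 * g - 2 + 1 = 2 * g - 1 := by omega
  rw [resTerm, mul_assoc, coeff_mul_range, h1]
  refine Finset.sum_congr rfl fun k _ => ?_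
  rw [Apoly_eval]
  simp only [bSeries, coeff_mk, mul_pow]
  ring

noncomputable def Xpoly (g : ℕ) : MvPolynomial (Fin 2) ℚ :=
  MvPolynomial.C ((-1) ^ g / 2 * (4 : ℚ) ^ (1 - (g : ℤ))) * (2 * MvPolynomial.X 1 + 1) *
    ∑ k ∈ Finset.range (2 * g - 1),
      if Even k then MvPolynomial.C (bernoulli k * 2 ^ k / k.factorial) * MvPolynomial.X 0 ^ k *
        Polynomial.aeval (MvPolynomial.X 1) (Apoly g (2 * g - 2 - k)) else 0

noncomputable def Ypoly (g : ℕ) : Polynomial ℚ :=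
  Polynomial.C ((-1) ^ g / 2) * (Polynomial.C ((4 : ℚ) ^ (1 - (g : ℤ))) * (2 * Polynomial.X + 1) *
    (∑ k ∈ Finset.range (2 * g - 1), if Even k then 0 else
      Polynomial.C (bernoulli k * 2 ^ k / k.factorial) * Apoly g (2 * g - 2 - k))
    - Polynomial.C ((1 : ℚ) / (2 * g - 2).factorial) *
        (descPochhammer ℚ (2 * g - 2)).comp (Polynomial.X + Polynomial.C ((g : ℚ) - 1)))

lemma eval_aeval (v : Fin 2 → ℚ) (q : Polynomial ℚ) :
    MvPolynomial.eval v (Polynomial.aeval (MvPolynomial.X 1) q) = Polynomial.eval (v 1) q := by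
  induction q using Polynomial.induction_on' with
  | add p q hp hq => simp [hp, hq]
  | monomial n a => simp [Polynomial.aeval_monomial, MvPolynomial.eval_X]

lemma Xpoly_eval (g : ℕ) (p c : ℚ) :
    MvPolynomial.eval ![p, c] (Xpoly g) = (-1) ^ g / 2 * (4 : ℚ) ^ (1 - (g : ℤ)) * (2 * c + 1) *
      ∑ k ∈ Finset.range (2 * g - 1), (if Even k then
        (bernoulli k * 2 ^ k / k.factorial) * p ^ k * (Apoly g (2 * g - 2 - k)).eval c else 0) := by
  simp only [Xpoly, map_mul, map_add, map_sum, MvPolynomial.eval_C, MvPolynomial.eval_X,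
    map_pow, map_ofNat, map_one, apply_ite (MvPolynomial.eval ![p, c]), map_zero, eval_aeval,
    Matrix.cons_val_one, Matrix.head_cons, Matrix.cons_val_zero]

lemma Ypoly_eval (g : ℕ) (c : ℚ) :
    Polynomial.eval c (Ypoly g) = (-1) ^ g / 2 * ((4 : ℚ) ^ (1 - (g : ℤ)) * (2 * c + 1) *
      (∑ k ∈ Finset.range (2 * g - 1), (if Even k then 0 else
        (bernoulli k * 2 ^ k / k.factorial) * (Apoly g (2 * g - 2 - k)).eval c))
      - (1 : ℚ) / (2 * g - 2).factorial *
          (descPochhammer ℚ (2 * g - 2)).eval (c + ((g : ℚ) - 1))) := by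
  simp only [Ypoly, Polynomial.eval_mul, Polynomial.eval_sub, Polynomial.eval_add,
    Polynomial.eval_C, Polynomial.eval_X, Polynomial.eval_comp, Polynomial.eval_finset_sum,
    Polynomial.eval_ofNat, Polynomial.eval_one, apply_ite (Polynomial.eval c),
    Polynomial.eval_zero]

lemma Xpoly_even (g : ℕ) (a b : ℚ) :
    MvPolynomial.eval ![-a, b] (Xpoly g) = MvPolynomial.eval ![a, b] (Xpoly g) := by
  rw [Xpoly_eval, Xpoly_eval]
  congr 1
  refine Finset.sum_congr rfl fun k _ => ?_
  by_cases h : Even k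
  · simp only [h, if_true, h.neg_pow]
  · simp [h]

lemma main_eval (g : ℕ) (hg : 1 ≤ g) (p c : ℚ) (hp : p ≠ 0) :
    p ^ (g - 1) * MvPolynomial.eval ![p, c] (Xpoly g) + p ^ g * Polynomial.eval c (Ypoly g)
      = Dval g p c := by
  rw [Xpoly_eval, Ypoly_eval, Dval, resTerm_eq g hg]
  have hpg : (-p) ^ g = (-1) ^ g * (p * p ^ (g - 1)) := by
    rw [neg_pow]
    congr 1
    rw [← pow_succ']
    congr 1
    omega
  have hgc : c + (g : ℚ) - 1 = c + ((g : ℚ) - 1) := by ring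
  rw [hgc]
  set F : ℚ := (4 : ℚ) ^ (1 - (g : ℤ)) with hF
  set P : ℚ := (descPochhammer ℚ (2 * g - 2)).eval (c + ((g : ℚ) - 1)) with hP
  have hpg2 : p ^ g = p * p ^ (g - 1) := by
    rw [← pow_succ']
    congr 1
    omega
  rw [hpg, hpg2]
  have hsum : ((-1) ^ g * (p * p ^ (g - 1)) / 2) * (F * ((2 * c + 1) / p) *
      ∑ k ∈ Finset.range (2 * g - 1),
        (bernoulli k * 2 ^ k / k.factorial) * p ^ k * (Apoly g (2 * g - 2 - k)).eval c)
    = p ^ (g - 1) * ((-1) ^ g / 2 * F * (2 * c + 1) *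
        ∑ k ∈ Finset.range (2 * g - 1), (if Even k then
          (bernoulli k * 2 ^ k / k.factorial) * p ^ k * (Apoly g (2 * g - 2 - k)).eval c else 0))
      + (p * p ^ (g - 1)) * ((-1) ^ g / 2 * (F * (2 * c + 1) *
          ∑ k ∈ Finset.range (2 * g - 1), (if Even k then 0 else
            (bernoulli k * 2 ^ k / k.factorial) * (Apoly g (2 * g - 2 - k)).eval c))) := by
    simp only [Finset.mul_sum]
    rw [← Finset.sum_add_distrib]
    refine Finset.sum_congr rfl fun k _ => ?_
    by_cases h : Even k
    · simp only [h, if_true, mul_zero]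
      field_simp
      ring
    · simp only [h, if_false, mul_zero]
      rcases eq_or_ne k 1 with hk | hk
      · subst hk
        field_simp
        ring
      · have hodd : Odd k := Nat.not_even_iff_odd.mp h
        have hb : bernoulli k = 0 := by
          rw [bernoulli_eq_bernoulli'_of_ne_one hk]
          obtain ⟨m, hm⟩ := hodd
          exact bernoulli'_eq_zero_of_odd ⟨m, hm⟩ (by omega)
        simp [hb]
  linear_combination -hsum

/-- `D_g^{(2c)} = p^{g−1}·X(p,c) + p^g·Y(c)` with `X` even in `p` and `Y` a polynomial
in `c` alone. -/
theorem verlinde_even_odd_decomposition (g : ℕ) (hg : 1 ≤ g) :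
    ∃ (D Xp : MvPolynomial (Fin 2) ℚ) (Y : Polynomial ℚ),
      (∀ p c : ℚ, p ≠ 0 → MvPolynomial.eval ![p, c] D = Dval g p c) ∧
      (∀ a b : ℚ, MvPolynomial.eval ![-a, b] Xp = MvPolynomial.eval ![a, b] Xp) ∧
      D = MvPolynomial.X 0 ^ (g - 1) * Xp
            + MvPolynomial.X 0 ^ g * Polynomial.aeval (MvPolynomial.X 1) Y := by
  refine ⟨MvPolynomial.X 0 ^ (g - 1) * Xpoly g
      + MvPolynomial.X 0 ^ g * Polynomial.aeval (MvPolynomial.X 1) (Ypoly g),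
    Xpoly g, Ypoly g, ?_, Xpoly_even g, rfl⟩
  intro p c hp
  rw [← main_eval g hg p c hp]
  simp [eval_aeval]
end

section
/- Suppose the sequence of functions (D_g)_{g≥1} of (p,s) satisfies the recursion D_{g+1}(p,s) = ∑_{y=1}^{(p−1)/2} (p − 2 max(s,y)) min(s,y) · D_g(p,y) with D_1(p,s) = s. Then for every g ≥ 1, D_g(p,s) agrees (for all odd p ≥ 3 and 1 ≤ s ≤ (p−1)/2) with p^{g−1} times a two-variable polynomial in p and s that is even in p and odd in s. -/
namespace VerlindeAux

open Polynomial

noncomputable def E (a b : ℚ) : Polynomial (Polynomial ℚ) →+* ℚ :=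
  Polynomial.eval₂RingHom (Polynomial.evalRingHom a) b

@[simp] lemma E_X (a b : ℚ) : E a b Polynomial.X = b := Polynomial.eval₂_X _ _

@[simp] lemma E_C (a b : ℚ) (c : Polynomial ℚ) : E a b (Polynomial.C c) = c.eval a :=
  Polynomial.eval₂_C _ _

/-- `S j` is the polynomial with `S j (n) = 1^j + 2^j + ⋯ + n^j`. -/
noncomputable def S (j : ℕ) : Polynomial ℚ :=
  Polynomial.C ((j + 1 : ℚ))⁻¹ *
    ((Polynomial.bernoulli (j + 1)).comp (Polynomial.X + 1)
      - Polynomial.C ((Polynomial.bernoulli (j + 1)).eval 1))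

lemma S_diff (j : ℕ) (b : ℚ) : (S j).eval b - (S j).eval (b - 1) = b ^ j := by
  have hne : ((j : ℚ) + 1) ≠ 0 := by positivity
  simp only [S, eval_mul, eval_C, eval_sub, eval_comp, eval_add, eval_X, eval_one]
  rw [show b - 1 + 1 = b by ring, show b + 1 = 1 + b by ring,
    Polynomial.bernoulli_eval_one_add (j + 1) b]
  simp only [Nat.add_sub_cancel]
  push_cast
  field_simp
  ring

lemma S_zero (j : ℕ) : (S j).eval 0 = 0 := by
  simp [S, eval_comp]

/-- Summation operator: `Sig P` evaluated at `(a, n)` is `∑_{y=1}^n P(a,y)`. -/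
noncomputable def Sig (P : Polynomial (Polynomial ℚ)) : Polynomial (Polynomial ℚ) :=
  P.sum fun j c => Polynomial.C c * (S j).map Polynomial.C

lemma E_map_CS (a b : ℚ) (j : ℕ) : E a b ((S j).map Polynomial.C) = (S j).eval b := by
  show Polynomial.eval₂ _ b _ = _
  rw [Polynomial.eval₂_map]
  have h : (Polynomial.evalRingHom a).comp (Polynomial.C : ℚ →+* Polynomial ℚ)
      = RingHom.id ℚ := by ext c; simp
  rw [h]
  rfl

lemma E_Sig (a b : ℚ) (P : Polynomial (Polynomial ℚ)) :
    E a b (Sig P) = ∑ j ∈ P.support, (P.coeff j).eval a * (S j).eval b := by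
  rw [Sig, Polynomial.sum_def, map_sum]
  refine Finset.sum_congr rfl fun j _ => ?_
  rw [map_mul, E_C, E_map_CS]

lemma E_eq_sum (a b : ℚ) (P : Polynomial (Polynomial ℚ)) :
    E a b P = ∑ j ∈ P.support, (P.coeff j).eval a * b ^ j := by
  show Polynomial.eval₂ _ b _ = _
  rw [Polynomial.eval₂_eq_sum, Polynomial.sum_def]
  rfl

lemma E_Sig_diff (a b : ℚ) (P : Polynomial (Polynomial ℚ)) :
    E a b (Sig P) - E a (b - 1) (Sig P) = E a b P := by
  rw [E_Sig, E_Sig, E_eq_sum, ← Finset.sum_sub_distrib]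
  refine Finset.sum_congr rfl fun j _ => ?_
  rw [← mul_sub, S_diff]

lemma E_Sig_zero (a : ℚ) (P : Polynomial (Polynomial ℚ)) : E a 0 (Sig P) = 0 := by
  rw [E_Sig]
  exact Finset.sum_eq_zero fun j _ => by rw [S_zero, mul_zero]

lemma E_Sig_nat (a : ℚ) (P : Polynomial (Polynomial ℚ)) (n : ℕ) :
    E a (n : ℚ) (Sig P) = ∑ y ∈ Finset.Icc 1 n, E a (y : ℚ) P := by
  induction n with
  | zero => simpa using E_Sig_zero a P
  | succ n ih =>
      have hd := E_Sig_diff a ((n + 1 : ℕ) : ℚ) P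
      have hc : ((n + 1 : ℕ) : ℚ) - 1 = (n : ℚ) := by push_cast; ring
      rw [hc] at hd
      rw [Finset.sum_Icc_succ_top (Nat.le_add_left 1 n), ← ih]
      linarith [hd]

lemma eval_eq_of_nat {u v : Polynomial ℚ} (h : ∀ n : ℕ, u.eval (n : ℚ) = v.eval (n : ℚ)) :
    ∀ b : ℚ, u.eval b = v.eval b := by
  have huv : u - v = 0 := by
    apply Polynomial.eq_zero_of_infinite_isRoot
    apply Set.infinite_of_injective_forall_mem (f := fun n : ℕ => (n : ℚ)) Nat.cast_injective
    intro n
    simp only [Set.mem_setOf_eq, Polynomial.IsRoot, Polynomial.eval_sub, h n, sub_self]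
  intro b
  have h2 := congrArg (Polynomial.eval b) huv
  simp only [Polynomial.eval_sub, Polynomial.eval_zero] at h2
  linarith

lemma eval_const {u : Polynomial ℚ} (h : ∀ b : ℚ, u.eval b = u.eval (b - 1)) :
    ∀ b : ℚ, u.eval b = u.eval 0 := by
  have hn : ∀ n : ℕ, u.eval (n : ℚ) = (Polynomial.C (u.eval 0)).eval (n : ℚ) := by
    intro n
    induction n with
    | zero => simp
    | succ n ih =>
        have h2 := h ((n : ℚ) + 1)
        have e : (n : ℚ) + 1 - 1 = (n : ℚ) := by ring
        rw [e] at h2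
        push_cast
        simp only [Polynomial.eval_C] at ih ⊢
        rw [h2]
        exact ih
  intro b
  simpa using eval_eq_of_nat hn b

lemma E_eval_map (a b : ℚ) (P : Polynomial (Polynomial ℚ)) :
    E a b P = (P.map (Polynomial.evalRingHom a)).eval b := by
  show Polynomial.eval₂ _ b _ = _
  rw [Polynomial.eval₂_eq_eval_map]

lemma refl_odd (a : ℚ) (P : Polynomial (Polynomial ℚ))
    (hodd : ∀ b : ℚ, E a (-b) P = - E a b P) :
    ∀ b : ℚ, E a (-b) (Sig P) = E a (b - 1) (Sig P) := by
  set u := (Sig P).map (Polynomial.evalRingHom a) with hu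
  have hEu : ∀ b : ℚ, u.eval b = E a b (Sig P) := fun b => (E_eval_map a b (Sig P)).symm
  set h := u.comp (-Polynomial.X) - u.comp (Polynomial.X - 1) with hh
  have hhe : ∀ b : ℚ, h.eval b = E a (-b) (Sig P) - E a (b - 1) (Sig P) := by
    intro b; simp [hh, Polynomial.eval_comp, hEu]
  have hstep : ∀ b : ℚ, h.eval b = h.eval (b - 1) := by
    intro b
    rw [hhe, hhe]
    have d1 := E_Sig_diff a (-(b - 1)) P
    have d2 := E_Sig_diff a (b - 1) P
    have ho := hodd (b - 1)
    rw [show -(b - 1) - 1 = -b by ring] at d1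
    linarith
  have h0 : h.eval 0 = 0 := by
    rw [hhe]
    have d0 := E_Sig_diff a 0 P
    have hz := E_Sig_zero a P
    have hv0 : E a 0 P = 0 := by have := hodd 0; rw [neg_zero] at this; linarith
    rw [show (0 : ℚ) - 1 = -1 by ring] at d0 ⊢
    rw [neg_zero]
    linarith
  intro b
  have hc := eval_const hstep b
  rw [hhe, h0] at hc
  linarith

lemma refl_even (a : ℚ) (P : Polynomial (Polynomial ℚ))
    (heven : ∀ b : ℚ, E a (-b) P = E a b P) (h0P : E a 0 P = 0) :
    ∀ b : ℚ, E a (-b) (Sig P) = - E a (b - 1) (Sig P) := by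
  set u := (Sig P).map (Polynomial.evalRingHom a) with hu
  have hEu : ∀ b : ℚ, u.eval b = E a b (Sig P) := fun b => (E_eval_map a b (Sig P)).symm
  set h := u.comp (-Polynomial.X) + u.comp (Polynomial.X - 1) with hh
  have hhe : ∀ b : ℚ, h.eval b = E a (-b) (Sig P) + E a (b - 1) (Sig P) := by
    intro b; simp [hh, Polynomial.eval_comp, hEu]
  have hstep : ∀ b : ℚ, h.eval b = h.eval (b - 1) := by
    intro b
    rw [hhe, hhe]
    have d1 := E_Sig_diff a (-(b - 1)) P
    have d2 := E_Sig_diff a (b - 1) P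
    have ho := heven (b - 1)
    rw [show -(b - 1) - 1 = -b by ring] at d1
    linarith
  have h0 : h.eval 0 = 0 := by
    rw [hhe]
    have d0 := E_Sig_diff a 0 P
    have hz := E_Sig_zero a P
    rw [show (0 : ℚ) - 1 = -1 by ring] at d0 ⊢
    rw [neg_zero]
    linarith
  intro b
  have hc := eval_const hstep b
  rw [hhe, h0] at hc
  linarith

lemma p_parity_Sig (a : ℚ) (P : Polynomial (Polynomial ℚ))
    (hp : ∀ b : ℚ, E (-a) b P = E a b P) :
    ∀ b : ℚ, E (-a) b (Sig P) = E a b (Sig P) := by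
  have h : ∀ n : ℕ, ((Sig P).map (Polynomial.evalRingHom (-a))).eval (n : ℚ)
      = ((Sig P).map (Polynomial.evalRingHom a)).eval (n : ℚ) := by
    intro n
    rw [← E_eval_map, ← E_eval_map, E_Sig_nat, E_Sig_nat]
    exact Finset.sum_congr rfl fun y _ => hp (y : ℚ)
  intro b
  rw [E_eval_map, E_eval_map]
  exact eval_eq_of_nat h b

lemma eval_evalR (a : ℚ) (r : Polynomial ℚ) (P : Polynomial (Polynomial ℚ)) :
    (P.eval r).eval a = E a (r.eval a) P := by
  have h := Polynomial.hom_eval₂ P (RingHom.id (Polynomial ℚ)) (Polynomial.evalRingHom a) r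
  rw [RingHom.comp_id] at h
  exact h


lemma key (q : Polynomial (Polynomial ℚ))
    (hqp : ∀ a b : ℚ, E (-a) b q = E a b q)
    (hqs : ∀ a b : ℚ, E a (-b) q = - E a b q) :
    ∃ Q' : Polynomial (Polynomial ℚ),
      (∀ a b : ℚ, E (-a) b Q' = E a b Q') ∧
      (∀ a b : ℚ, E a (-b) Q' = - E a b Q') ∧
      ∀ p s : ℕ, Odd p → 3 ≤ p → 1 ≤ s → s ≤ (p - 1) / 2 →
        (∑ y ∈ Finset.Icc 1 ((p - 1) / 2),
            ((p : ℚ) - 2 * (max s y : ℕ)) * ((min s y : ℕ) : ℚ) * E (p : ℚ) (y : ℚ) q)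
          = (p : ℚ) * E (p : ℚ) (s : ℚ) Q' := by
  classical
  set xq := Polynomial.X * q with hxq_def
  have E_xq : ∀ a b : ℚ, E a b xq = b * E a b q := by
    intro a b; rw [hxq_def, map_mul, E_X]
  have hxq_p : ∀ a b : ℚ, E (-a) b xq = E a b xq := by
    intro a b; rw [E_xq, E_xq, hqp]
  have hxq_even : ∀ a b : ℚ, E a (-b) xq = E a b xq := by
    intro a b; rw [E_xq, E_xq, hqs]; ring
  have hxq_zero : ∀ a : ℚ, E a 0 xq = 0 := by
    intro a; rw [E_xq]; ring
  set α := Sig xq with hα_def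
  set γ := Sig q with hγ_def
  set r₀ : Polynomial ℚ := Polynomial.C (1/2 : ℚ) * (Polynomial.X - 1) with hr₀_def
  have hr₀ : ∀ a : ℚ, r₀.eval a = (a - 1) / 2 := by
    intro a; simp [hr₀_def]; ring
  set Γ₀ : Polynomial ℚ := γ.eval r₀ with hΓ₀_def
  set β₀ : Polynomial ℚ := α.eval r₀ with hβ₀_def
  set ε₀ : Polynomial ℚ := β₀.divX with hε₀_def
  set Q' : Polynomial (Polynomial ℚ) :=
    α + Polynomial.X * (Polynomial.C Γ₀ - γ - Polynomial.C (2 * ε₀)) with hQ'_def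
  -- basic evaluation facts
  have hΓ₀e : ∀ a : ℚ, Γ₀.eval a = E a ((a - 1) / 2) γ := by
    intro a; rw [hΓ₀_def, eval_evalR, hr₀]
  have hβ₀e : ∀ a : ℚ, β₀.eval a = E a ((a - 1) / 2) α := by
    intro a; rw [hβ₀_def, eval_evalR, hr₀]
  have hα_p : ∀ a b : ℚ, E (-a) b α = E a b α := fun a b => p_parity_Sig a xq (hxq_p a) b
  have hγ_p : ∀ a b : ℚ, E (-a) b γ = E a b γ := fun a b => p_parity_Sig a q (hqp a) b
  have hα_refl : ∀ a b : ℚ, E a (-b) α = - E a (b - 1) α :=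
    fun a b => refl_even a xq (hxq_even a) (hxq_zero a) b
  have hγ_refl : ∀ a b : ℚ, E a (-b) γ = E a (b - 1) γ :=
    fun a b => refl_odd a q (hqs a) b
  -- parity of Γ₀, β₀, ε₀
  have hΓ₀p : ∀ a : ℚ, Γ₀.eval (-a) = Γ₀.eval a := by
    intro a
    rw [hΓ₀e, hΓ₀e, hγ_p]
    have e : (-a - 1) / 2 = -((a - 1) / 2 + 1) := by ring
    rw [e, hγ_refl]
    norm_num
  have hβ₀odd : ∀ a : ℚ, β₀.eval (-a) = - β₀.eval a := by
    intro a
    rw [hβ₀e, hβ₀e, hα_p]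
    have e : (-a - 1) / 2 = -((a - 1) / 2 + 1) := by ring
    rw [e, hα_refl]
    norm_num
  have hβ₀X : Polynomial.X * ε₀ = β₀ := by
    have h0 : β₀.coeff 0 = 0 := by
      rw [Polynomial.coeff_zero_eq_eval_zero]
      have := hβ₀odd 0
      rw [neg_zero] at this
      linarith
    have := Polynomial.X_mul_divX_add β₀
    rw [h0] at this
    simpa [hε₀_def] using this
  have hε : ∀ a : ℚ, a * ε₀.eval a = β₀.eval a := by
    intro a
    have := congrArg (Polynomial.eval a) hβ₀X
    simpa using this
  have hεp : ∀ a : ℚ, ε₀.eval (-a) = ε₀.eval a := by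
    intro a
    rcases eq_or_ne a 0 with rfl | ha
    · rw [neg_zero]
    · have h1 := hε (-a)
      have h2 := hε a
      have h3 := hβ₀odd a
      have : (-a) * ε₀.eval (-a) = (-a) * ε₀.eval a := by linarith
      exact mul_left_cancel₀ (neg_ne_zero.mpr ha) this
  -- expansion of E a b Q'
  have hEQ' : ∀ a b : ℚ, E a b Q'
      = E a b α + b * (Γ₀.eval a - E a b γ - 2 * ε₀.eval a) := by
    intro a b
    rw [hQ'_def]
    rw [map_add, map_mul, E_X, map_sub, map_sub, E_C, E_C, Polynomial.eval_mul,
      Polynomial.eval_ofNat]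
  -- difference equations
  have hα_diff : ∀ a b : ℚ, E a b α - E a (b - 1) α = b * E a b q := by
    intro a b; rw [hα_def, E_Sig_diff, E_xq]
  have hγ_diff : ∀ a b : ℚ, E a b γ - E a (b - 1) γ = E a b q := by
    intro a b; rw [hγ_def, E_Sig_diff]
  refine ⟨Q', ?_, ?_, ?_⟩
  · intro a b
    rw [hEQ', hEQ', hα_p, hγ_p, hΓ₀p, hεp]
  · intro a b
    rw [hEQ', hEQ', hα_refl, hγ_refl]
    have d1 := hα_diff a b
    have d2 := hγ_diff a b
    linear_combination d1 - b * d2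
  · intro p s hodd h3 hs1 hs2
    obtain ⟨k, hk⟩ := hodd
    have hm : (p - 1) / 2 = k := by omega
    have hsk : s ≤ k := by omega
    have hpq : (p : ℚ) = 2 * (k : ℚ) + 1 := by
      rw [hk]; push_cast; ring
    rw [hm] at hs2 ⊢
    -- rewrite each term of the sum
    have hterm : ∀ y ∈ Finset.Icc 1 k,
        ((p : ℚ) - 2 * (max s y : ℕ)) * ((min s y : ℕ) : ℚ) * E (p : ℚ) (y : ℚ) q
        = (p : ℚ) * ((min s y : ℕ) : ℚ) * E (p : ℚ) (y : ℚ) q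
          - 2 * (s : ℚ) * (y : ℚ) * E (p : ℚ) (y : ℚ) q := by
      intro y _
      have hmn : (max s y : ℕ) * (min s y : ℕ) = s * y := by
        rcases le_total s y with h | h
        · rw [max_eq_right h, min_eq_left h, Nat.mul_comm]
        · rw [max_eq_left h, min_eq_right h]
      have hc : ((max s y : ℕ) : ℚ) * ((min s y : ℕ) : ℚ) = (s : ℚ) * (y : ℚ) := by
        exact_mod_cast congrArg (Nat.cast : ℕ → ℚ) hmn
      linear_combination (-2 * E (p : ℚ) (y : ℚ) q) * hc
    rw [Finset.sum_congr rfl hterm, Finset.sum_sub_distrib]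
    -- the second sum
    have hB : ∑ y ∈ Finset.Icc 1 k, 2 * (s : ℚ) * (y : ℚ) * E (p : ℚ) (y : ℚ) q
        = 2 * (s : ℚ) * ((p : ℚ) * ε₀.eval (p : ℚ)) := by
      have h1 : ∑ y ∈ Finset.Icc 1 k, 2 * (s : ℚ) * (y : ℚ) * E (p : ℚ) (y : ℚ) q
          = 2 * (s : ℚ) * ∑ y ∈ Finset.Icc 1 k, E (p : ℚ) (y : ℚ) xq := by
        rw [Finset.mul_sum]
        exact Finset.sum_congr rfl fun y _ => by rw [E_xq]; ring
      rw [h1, ← E_Sig_nat, ← hα_def]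
      have h2 : E (p : ℚ) (k : ℚ) α = β₀.eval (p : ℚ) := by
        rw [hβ₀e]
        congr 1
        rw [hpq]; ring
      rw [h2, ← hε]
    -- the first sum
    have hIoc : ∀ n : ℕ, Finset.Ioc 0 n = Finset.Icc 1 n := by
      intro n; rw [← Finset.Icc_add_one_left_eq_Ioc, zero_add]
    have hA : ∑ y ∈ Finset.Icc 1 k, (p : ℚ) * ((min s y : ℕ) : ℚ) * E (p : ℚ) (y : ℚ) q
        = (p : ℚ) * (E (p : ℚ) (s : ℚ) α
            + (s : ℚ) * (E (p : ℚ) (k : ℚ) γ - E (p : ℚ) (s : ℚ) γ)) := by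
      have hsplit := Finset.sum_Ioc_consecutive
        (fun y : ℕ => ((min s y : ℕ) : ℚ) * E (p : ℚ) (y : ℚ) q) (Nat.zero_le s) hsk
      rw [hIoc, hIoc] at hsplit
      have e0 : ∑ y ∈ Finset.Icc 1 k, (p : ℚ) * ((min s y : ℕ) : ℚ) * E (p : ℚ) (y : ℚ) q
          = (p : ℚ) * ∑ y ∈ Finset.Icc 1 k, ((min s y : ℕ) : ℚ) * E (p : ℚ) (y : ℚ) q := by
        rw [Finset.mul_sum]
        exact Finset.sum_congr rfl fun y _ => by ring
      have e1 : ∑ y ∈ Finset.Icc 1 s, ((min s y : ℕ) : ℚ) * E (p : ℚ) (y : ℚ) q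
          = E (p : ℚ) (s : ℚ) α := by
        rw [hα_def, E_Sig_nat]
        refine Finset.sum_congr rfl fun y hy => ?_
        have hy' : y ≤ s := (Finset.mem_Icc.mp hy).2
        rw [min_eq_right hy', E_xq]
      have e2 : ∑ y ∈ Finset.Ioc s k, ((min s y : ℕ) : ℚ) * E (p : ℚ) (y : ℚ) q
          = (s : ℚ) * (E (p : ℚ) (k : ℚ) γ - E (p : ℚ) (s : ℚ) γ) := by
        have e3 : ∑ y ∈ Finset.Ioc s k, ((min s y : ℕ) : ℚ) * E (p : ℚ) (y : ℚ) q
            = (s : ℚ) * ∑ y ∈ Finset.Ioc s k, E (p : ℚ) (y : ℚ) q := by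
          rw [Finset.mul_sum]
          refine Finset.sum_congr rfl fun y hy => ?_
          have hy' : s ≤ y := le_of_lt (Finset.mem_Ioc.mp hy).1
          rw [min_eq_left hy']
        have h4 := Finset.sum_Ioc_consecutive
          (fun y : ℕ => E (p : ℚ) (y : ℚ) q) (Nat.zero_le s) hsk
        rw [hIoc, hIoc] at h4
        have h5 : ∑ y ∈ Finset.Icc 1 s, E (p : ℚ) (y : ℚ) q = E (p : ℚ) (s : ℚ) γ := by
          rw [hγ_def, E_Sig_nat]
        have h6 : ∑ y ∈ Finset.Icc 1 k, E (p : ℚ) (y : ℚ) q = E (p : ℚ) (k : ℚ) γ := by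
          rw [hγ_def, E_Sig_nat]
        rw [e3]
        rw [h5, h6] at h4
        rw [show ∑ y ∈ Finset.Ioc s k, E (p : ℚ) (y : ℚ) q
            = E (p : ℚ) (k : ℚ) γ - E (p : ℚ) (s : ℚ) γ by linarith]
      rw [e0, ← hsplit, e1, e2]
    rw [hA, hB, hEQ']
    have hΓk : Γ₀.eval (p : ℚ) = E (p : ℚ) (k : ℚ) γ := by
      rw [hΓ₀e]
      congr 1
      rw [hpq]; ring
    rw [hΓk]
    ring

/-- Transfer an `MvPolynomial` in two variables to a nested polynomial. -/
noncomputable def toP (Q : MvPolynomial (Fin 2) ℚ) : Polynomial (Polynomial ℚ) :=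
  MvPolynomial.aeval ![Polynomial.C Polynomial.X, Polynomial.X] Q

lemma toP_compat (Q : MvPolynomial (Fin 2) ℚ) (a b : ℚ) :
    E a b (toP Q) = MvPolynomial.eval ![a, b] Q := by
  induction Q using MvPolynomial.induction_on with
  | C c =>
      simp only [toP, map_C, MvPolynomial.aeval_C, MvPolynomial.eval_C]
      have : (algebraMap ℚ (Polynomial (Polynomial ℚ))) c
          = Polynomial.C (Polynomial.C c) := rfl
      rw [this, E_C, Polynomial.eval_C]
  | add P1 P2 h1 h2 =>
      simp only [toP] at h1 h2 ⊢
      rw [map_add, map_add, map_add, h1, h2]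
  | mul_X P i h =>
      simp only [toP] at h ⊢
      rw [map_mul, map_mul, map_mul, h, MvPolynomial.aeval_X, MvPolynomial.eval_X]
      congr 1
      fin_cases i <;> simp

/-- Transfer a nested polynomial back to an `MvPolynomial` in two variables. -/
noncomputable def toMv (P : Polynomial (Polynomial ℚ)) : MvPolynomial (Fin 2) ℚ :=
  Polynomial.eval₂
    ((Polynomial.aeval (MvPolynomial.X 0 : MvPolynomial (Fin 2) ℚ)).toRingHom)
    (MvPolynomial.X 1) P

lemma toMv_compat (P : Polynomial (Polynomial ℚ)) (a b : ℚ) :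
    MvPolynomial.eval ![a, b] (toMv P) = E a b P := by
  rw [toMv, Polynomial.hom_eval₂]
  have h1 : (MvPolynomial.eval ![a, b]).comp
      ((Polynomial.aeval (MvPolynomial.X 0 : MvPolynomial (Fin 2) ℚ)).toRingHom)
      = Polynomial.evalRingHom a := by
    apply Polynomial.ringHom_ext
    · intro c; simp
    · simp
  have h2 : (MvPolynomial.eval ![a, b]) (MvPolynomial.X 1 : MvPolynomial (Fin 2) ℚ) = b := by
    simp
  rw [h1, h2]
  rfl

end VerlindeAux

/-- If `(D_g)` satisfies the fusion recursion with `D_1(p,s) = s`, then `D_g(p,s)` agrees,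
for odd `p ≥ 3` and `1 ≤ s ≤ (p−1)/2`, with `p^{g−1}` times a two-variable polynomial in
`p` and `s` which is even in `p` and odd in `s`. -/
theorem verlinde_recursion_parity (D : ℕ → ℕ → ℕ → ℚ)
    (h1 : ∀ p s : ℕ, Odd p → 3 ≤ p → 1 ≤ s → s ≤ (p - 1) / 2 → D 1 p s = s)
    (hrec : ∀ g : ℕ, 1 ≤ g → ∀ p s : ℕ, Odd p → 3 ≤ p → 1 ≤ s → s ≤ (p - 1) / 2 →
      D (g + 1) p s
        = ∑ y ∈ Finset.Icc 1 ((p - 1) / 2),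
            ((p : ℚ) - 2 * (max s y : ℕ)) * (min s y : ℕ) * D g p y) :
    ∀ g : ℕ, 1 ≤ g → ∃ Q : MvPolynomial (Fin 2) ℚ,
      (∀ a b : ℚ, MvPolynomial.eval ![-a, b] Q = MvPolynomial.eval ![a, b] Q) ∧
      (∀ a b : ℚ, MvPolynomial.eval ![a, -b] Q = -MvPolynomial.eval ![a, b] Q) ∧
      ∀ p s : ℕ, Odd p → 3 ≤ p → 1 ≤ s → s ≤ (p - 1) / 2 →
        D g p s = (p : ℚ)^(g - 1) * MvPolynomial.eval ![(p : ℚ), (s : ℚ)] Q := by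
  intro g hg
  induction g, hg using Nat.le_induction with
  | base =>
      refine ⟨MvPolynomial.X 1, ?_, ?_, ?_⟩
      · intro a b; simp
      · intro a b; simp
      · intro p s hodd h3 hs1 hs2
        simp only [MvPolynomial.eval_X]
        rw [h1 p s hodd h3 hs1 hs2]
        simp
  | succ g hg ih =>
      obtain ⟨Q, hQp, hQs, hQval⟩ := ih
      set q := VerlindeAux.toP Q with hq_def
      have hqp : ∀ a b : ℚ, VerlindeAux.E (-a) b q = VerlindeAux.E a b q := by
        intro a b
        rw [hq_def, VerlindeAux.toP_compat, VerlindeAux.toP_compat]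
        exact hQp a b
      have hqs : ∀ a b : ℚ, VerlindeAux.E a (-b) q = - VerlindeAux.E a b q := by
        intro a b
        rw [hq_def, VerlindeAux.toP_compat, VerlindeAux.toP_compat]
        exact hQs a b
      obtain ⟨Q', hQ'p, hQ's, hQ'val⟩ := VerlindeAux.key q hqp hqs
      refine ⟨VerlindeAux.toMv Q', ?_, ?_, ?_⟩
      · intro a b; rw [VerlindeAux.toMv_compat, VerlindeAux.toMv_compat]; exact hQ'p a b
      · intro a b; rw [VerlindeAux.toMv_compat, VerlindeAux.toMv_compat]; exact hQ's a b
      · intro p s hodd h3 hs1 hs2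
        rw [hrec g hg p s hodd h3 hs1 hs2]
        have hterm : ∀ y ∈ Finset.Icc 1 ((p - 1) / 2),
            ((p : ℚ) - 2 * (max s y : ℕ)) * ((min s y : ℕ) : ℚ) * D g p y
            = (p : ℚ) ^ (g - 1) *
              (((p : ℚ) - 2 * (max s y : ℕ)) * ((min s y : ℕ) : ℚ)
                * VerlindeAux.E (p : ℚ) (y : ℚ) q) := by
          intro y hy
          obtain ⟨hy1, hy2⟩ := Finset.mem_Icc.mp hy
          rw [hQval p y hodd h3 hy1 hy2, hq_def, VerlindeAux.toP_compat]
          ring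
        rw [Finset.sum_congr rfl hterm, ← Finset.mul_sum,
          hQ'val p s hodd h3 hs1 hs2, VerlindeAux.toMv_compat]
        have hp0 : (p : ℚ) ≠ 0 := by
          have : 0 < p := by omega
          exact_mod_cast this.ne'
        have hg1 : g + 1 - 1 = (g - 1) + 1 := by omega
        rw [hg1, pow_succ]
        ring
end
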